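/- arXiv:2110.13302 — 2 statements merged into one kernel-verified Lean document; each statement's English description precedes it below -/
import Mathlib

section
/- Uniform disk lemma: let r = (R_j)_{j≥1} be a generic sequence of radii, and let m = (m_j)_{j≥1}, ℓ = (ℓ_j)_{j≥2} be sequences of positive integers such that condition (3.2) at k holds for every k ≥ 1; let α be the itinerary associated to m and ℓ. If there exist a point x ∈ ℂ_p and a parameter c ∈ C(r) such that x lies in the cylinder C_c(α), then every y ∈ ℂ_p with |y − x| < ϱ² also lies in C_c(α). -/
noncomputable section

/-- `K` is a model of `ℂ_p`, the completion of an algebraic closure of `ℚ_p`: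
it is a complete, algebraically closed, nonarchimedean normed field whose norm
extends the `p`-adic absolute value and in which the algebraic elements over
`ℚ_p` are dense. -/
structure IsCp (p : ℕ) [Fact p.Prime] (K : Type*) [NormedField K] [Algebra ℚ_[p] K] : Prop where
  complete : CompleteSpace K
  norm_extends : ∀ x : ℚ_[p], ‖algebraMap ℚ_[p] K x‖ = ‖x‖
  isAlgClosed : IsAlgClosed K
  dense_algebraic : Dense {x : K | IsAlgebraic ℚ_[p] x}
  isNonarch : ∀ x y : K, ‖x + y‖ ≤ max ‖x‖ ‖y‖

/-- `ϱ = p^{-1/(p-1)}`. -/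
def rho (p : ℕ) : ℝ := (p : ℝ) ^ (-1 / ((p : ℝ) - 1))

/-- `R` is a sequence of radii: strictly increasing (for indices `≥ 1`),
with `R 1 > p`, tending to infinity. -/
def IsRadii (p : ℕ) (R : ℕ → ℝ) : Prop :=
  (∀ j, 1 ≤ j → R j < R (j + 1)) ∧ (p : ℝ) < R 1 ∧
    Filter.Tendsto R Filter.atTop Filter.atTop

/-- The piecewise-monomial map `φ`: for `R_{j-1} < t ≤ R_j` (with `R_0 := 0`),
`φ(t) = p (R_1 ⋯ R_{j-1})⁻¹ t^{p+j-1}`. -/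
def phi (p : ℕ) (R : ℕ → ℝ) (t : ℝ) : ℝ :=
  let j := sInf {j : ℕ | 1 ≤ j ∧ t ≤ R j}
  (p : ℝ) * (∏ i ∈ Finset.Icc 1 (j - 1), R i)⁻¹ * t ^ (p + j - 1)

/-- A generic sequence of radii. -/
def IsGenericRadii (p : ℕ) (R : ℕ → ℝ) : Prop :=
  IsRadii p R ∧ ∀ i j n : ℕ, 1 ≤ i → i < j → 1 ≤ n → (phi p R)^[n] (R i) ≠ R j

/-- Membership in the parameter space `C(r)`: `|c_j| = R_j` for all `j ≥ 1`. -/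
def InC (p : ℕ) [Fact p.Prime] {K : Type*} [NormedField K] (R : ℕ → ℝ) (c : ℕ → K) : Prop :=
  ∀ j, 1 ≤ j → ‖c j‖ = R j

/-- The transcendental entire map `f_c(z) = (z^p/p) ∏_{j ≥ 1} (1 - z/c_j)`. -/
def fc (p : ℕ) {K : Type*} [NormedField K] (c : ℕ → K) (z : K) : K :=
  z ^ p / (p : K) * ∏' j : ℕ, (1 - z / c (j + 1))

/-- The disk `B_0 = {|z| < 1}` for `j = 0`, and `B_j = {|z - c_j| < R_j}` for `j ≥ 1`. -/
def Bset {K : Type*} [NormedField K] (R : ℕ → ℝ) (c : ℕ → K) (j : ℕ) : Set K :=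
  if j = 0 then {z : K | ‖z‖ < 1} else {z : K | ‖z - c j‖ < R j}

/-- The set `A`, complement of all the disks `B_j`, `j ≥ 0`. -/
def Aset {K : Type*} [NormedField K] (R : ℕ → ℝ) (c : ℕ → K) : Set K :=
  (⋃ j, Bset R c j)ᶜ

/-- `n_j`, the minimal `n ≥ 1` with `R_j < φ^{∘(n+1)}(1)`. -/
def nseq (p : ℕ) (R : ℕ → ℝ) (j : ℕ) : ℕ :=
  sInf {n : ℕ | 1 ≤ n ∧ R j < (phi p R)^[n + 1] 1}

/-- `S_j = φ⁻¹(R_j)`. -/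
def Sse (p : ℕ) (R : ℕ → ℝ) (j : ℕ) : ℝ := Function.invFun (phi p R) (R j)

/-- `λ_j = φ(R_j)/R_j`. -/
def lam (p : ℕ) (R : ℕ → ℝ) (j : ℕ) : ℝ := phi p R (R j) / R j

/-- `L_k`: index of the first symbol of the `k`-th block `B_0^{m_k} A^{n_k} B_k^{…}`
of the itinerary `α(m, ℓ)`; `L_1 = 0` and `L_{k+1} = L_k + m_k + n_k + ℓ_{k+1}`. -/
def Lseq (m n l : ℕ → ℕ) : ℕ → ℕ
  | 0 => 0
  | 1 => 0
  | k + 2 => Lseq m n l (k + 1) + m (k + 1) + n (k + 1) + l (k + 2)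

/-- `N_k = L_k + m_k + n_k`, the index of the final symbol `B_k` of the truncated
itinerary `α^{(k)}` (so `α^{(k)}` has length `N_k + 1`). -/
def Nseq (m n l : ℕ → ℕ) (k : ℕ) : ℕ := Lseq m n l k + m k + n k

/-- The symbol (`some 0 = B_0`, `none = A`, `some k = B_k`) at position `i` of the
itinerary `α(m,ℓ) = B_0^{m_1} A^{n_1} B_1^{ℓ_2} B_0^{m_2} A^{n_2} B_2^{ℓ_3} ⋯`. -/
def itin (m n l : ℕ → ℕ) (i : ℕ) : Option ℕ :=
  let k := sSup {k : ℕ | 1 ≤ k ∧ Lseq m n l k ≤ i}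
  if i < Lseq m n l k + m k then some 0
  else if i < Lseq m n l k + m k + n k then none
  else some k

/-- The subset of `ℂ_p` corresponding to a symbol of the alphabet `{A, B_0, B_1, …}`. -/
def symbSet {K : Type*} [NormedField K] (R : ℕ → ℝ) (c : ℕ → K) : Option ℕ → Set K
  | none => Aset R c
  | some j => Bset R c j

/-- Condition (3.2) at `k`: `ϱ⁻¹ R_k p^{-m_k} λ_k^{ℓ_{k+1}} < 1`. -/
def Cond32 (p : ℕ) (R : ℕ → ℝ) (m l : ℕ → ℕ) (k : ℕ) : Prop :=
  (rho p)⁻¹ * R k * ((p : ℝ) ^ m k)⁻¹ * lam p R k ^ l (k + 1) < 1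

/-- Condition (3.3) for `k`: for all `2 ≤ j < k`,
`ε_k < ϱ^{k-j} R_k² (R_{j-1} S_{j-1})⁻¹ λ_{j-1}^{-ℓ_j}`. -/
def Cond33 (p : ℕ) (R : ℕ → ℝ) (ε : ℕ → ℝ) (l : ℕ → ℕ) (k : ℕ) : Prop :=
  ∀ j, 2 ≤ j → j < k →
    ε k < rho p ^ (k - j) * R k ^ 2 * (R (j - 1) * Sse p R (j - 1))⁻¹ *
      (lam p R (j - 1) ^ l j)⁻¹

/-- Condition (3.4) for `k`: for all `2 ≤ j ≤ k`,
`ϱ^{-2} R_{j-1} S_{j-1} λ_{j-1}^{ℓ_j} p^{-m_j} < 1`. -/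
def Cond34 (p : ℕ) (R : ℕ → ℝ) (m l : ℕ → ℕ) (k : ℕ) : Prop :=
  ∀ j, 2 ≤ j → j ≤ k →
    ((rho p) ^ 2)⁻¹ * (R (j - 1) * Sse p R (j - 1)) * lam p R (j - 1) ^ l j *
      ((p : ℝ) ^ m j)⁻¹ < 1

/-- Condition (3.5) at `k`: `p ϱ⁻¹ R_{k+1}² S_k⁻¹ λ_k^{-ℓ_{k+1}} < ε_{k+1}`. -/
def Cond35 (p : ℕ) (R : ℕ → ℝ) (ε : ℕ → ℝ) (l : ℕ → ℕ) (k : ℕ) : Prop :=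
  (p : ℝ) * (rho p)⁻¹ * R (k + 1) ^ 2 * (Sse p R k)⁻¹ * (lam p R k ^ l (k + 1))⁻¹ < ε (k + 1)

/-- `c' ∈ Δ_k(c, ε)`. -/
def InDelta (p : ℕ) [Fact p.Prime] {K : Type*} [NormedField K] (R : ℕ → ℝ) (c : ℕ → K)
    (ε : ℕ → ℝ) (k : ℕ) (c' : ℕ → K) : Prop :=
  InC p R c' ∧ (∀ j, 1 ≤ j → j < k → c' j = c j) ∧ ∀ j, k ≤ j → ‖c' j - c j‖ < ε j

/-- `c' ∈ U_k(c, ε)`. -/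
def InU (p : ℕ) [Fact p.Prime] {K : Type*} [NormedField K] (R : ℕ → ℝ) (c : ℕ → K)
    (k : ℕ) (ε : ℝ) (c' : ℕ → K) : Prop :=
  InC p R c' ∧ ‖c' k - c k‖ < ε ∧ ∀ j, 1 ≤ j → j ≠ k → c' j = c j


set_option linter.unusedSectionVars false

namespace UDAux

open Finset

variable {K : Type*} [NormedField K]

lemma na_sub (na : ∀ x y : K, ‖x + y‖ ≤ max ‖x‖ ‖y‖) (x y : K) :
    ‖x - y‖ ≤ max ‖x‖ ‖y‖ := by
  simpa [sub_eq_add_neg] using na x (-y)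

lemma na_add_eq (na : ∀ x y : K, ‖x + y‖ ≤ max ‖x‖ ‖y‖) {x y : K} (h : ‖y‖ < ‖x‖) :
    ‖x + y‖ = ‖x‖ := by
  refine le_antisymm ((na x y).trans_eq (max_eq_left h.le)) ?_
  by_contra hlt
  push_neg at hlt
  have h1 : ‖x‖ ≤ max ‖x + y‖ ‖y‖ := by
    simpa using na (x + y) (-y)
  exact absurd (h1.trans_lt (max_lt hlt h)) (lt_irrefl _)

lemma na_sub_eq (na : ∀ x y : K, ‖x + y‖ ≤ max ‖x‖ ‖y‖) {x y : K} (h : ‖y‖ < ‖x‖) :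
    ‖x - y‖ = ‖x‖ := by
  rw [sub_eq_add_neg]
  exact na_add_eq na (by simpa using h)

lemma na_sum {ι : Type*} (na : ∀ x y : K, ‖x + y‖ ≤ max ‖x‖ ‖y‖) (s : Finset ι)
    (f : ι → K) {C : ℝ} (hC : 0 ≤ C) (h : ∀ i ∈ s, ‖f i‖ ≤ C) :
    ‖∑ i ∈ s, f i‖ ≤ C := by
  classical
  induction s using Finset.cons_induction with
  | empty => simpa using hC
  | cons a s ha ih =>
    rw [Finset.sum_cons]
    refine (na _ _).trans (max_le (h a (Finset.mem_cons_self a s)) ?_)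
    exact ih (fun i hi => h i (Finset.mem_cons_of_mem hi))

lemma na_prod_le {ι : Type*} (s : Finset ι) (f : ι → K) (B : ι → ℝ)
    (h : ∀ i ∈ s, ‖f i‖ ≤ B i) :
    ‖∏ i ∈ s, f i‖ ≤ ∏ i ∈ s, B i := by
  rw [norm_prod]
  exact Finset.prod_le_prod (fun i _ => norm_nonneg _) h

lemma na_prod_diff {ι : Type*} (na : ∀ x y : K, ‖x + y‖ ≤ max ‖x‖ ‖y‖) (s : Finset ι)
    (f g : ι → K) (B : ι → ℝ) {ε : ℝ} (hε : 0 ≤ ε)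
    (hf : ∀ i ∈ s, ‖f i‖ ≤ B i) (hg : ∀ i ∈ s, ‖g i‖ ≤ B i)
    (hd : ∀ i ∈ s, ‖f i - g i‖ ≤ ε * B i) :
    ‖∏ i ∈ s, f i - ∏ i ∈ s, g i‖ ≤ ε * ∏ i ∈ s, B i := by
  classical
  induction s using Finset.cons_induction with
  | empty => simpa using hε
  | cons a s ha ih =>
    rw [Finset.prod_cons, Finset.prod_cons, Finset.prod_cons]
    have hBs : 0 ≤ ∏ i ∈ s, B i :=
      Finset.prod_nonneg (fun i hi => (norm_nonneg (f i)).trans (hf i (Finset.mem_cons_of_mem hi)))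
    have hBa : 0 ≤ B a := (norm_nonneg (f a)).trans (hf a (Finset.mem_cons_self a s))
    have key : f a * ∏ i ∈ s, f i - g a * ∏ i ∈ s, g i
        = (f a - g a) * ∏ i ∈ s, f i + g a * (∏ i ∈ s, f i - ∏ i ∈ s, g i) := by ring
    rw [key]
    refine (na _ _).trans (max_le ?_ ?_)
    · rw [norm_mul]
      have h1 : ‖f a - g a‖ ≤ ε * B a := hd a (Finset.mem_cons_self a s)
      have h2 : ‖∏ i ∈ s, f i‖ ≤ ∏ i ∈ s, B i :=
        na_prod_le s f B (fun i hi => hf i (Finset.mem_cons_of_mem hi))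
      calc ‖f a - g a‖ * ‖∏ i ∈ s, f i‖ ≤ (ε * B a) * ∏ i ∈ s, B i :=
            mul_le_mul h1 h2 (norm_nonneg _) (mul_nonneg hε hBa)
        _ = ε * (B a * ∏ i ∈ s, B i) := by ring
    · rw [norm_mul]
      have h1 : ‖g a‖ ≤ B a := hg a (Finset.mem_cons_self a s)
      have h2 : ‖∏ i ∈ s, f i - ∏ i ∈ s, g i‖ ≤ ε * ∏ i ∈ s, B i :=
        ih (fun i hi => hf i (Finset.mem_cons_of_mem hi))
          (fun i hi => hg i (Finset.mem_cons_of_mem hi))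
          (fun i hi => hd i (Finset.mem_cons_of_mem hi))
      calc ‖g a‖ * ‖∏ i ∈ s, f i - ∏ i ∈ s, g i‖ ≤ B a * (ε * ∏ i ∈ s, B i) :=
            mul_le_mul h1 h2 (norm_nonneg _) hBa
        _ = ε * (B a * ∏ i ∈ s, B i) := by ring

lemma one_lt_castp {p : ℕ} (hp : 2 ≤ p) : (1:ℝ) < (p:ℝ) := by
  have : (2:ℝ) ≤ (p:ℝ) := by exact_mod_cast hp
  linarith

lemma rho_pos {p : ℕ} (hp : 2 ≤ p) : 0 < rho p :=
  Real.rpow_pos_of_pos (by linarith [one_lt_castp hp]) _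

lemma rho_lt_one {p : ℕ} (hp : 2 ≤ p) : rho p < 1 := by
  have h1 := one_lt_castp hp
  refine Real.rpow_lt_one_of_one_lt_of_neg h1 ?_
  have : (0:ℝ) < (p:ℝ) - 1 := by linarith
  rw [neg_div]
  exact neg_neg_of_pos (div_pos one_pos this)

lemma rho_pow_pred {p : ℕ} (hp : 2 ≤ p) : rho p ^ (p - 1) = (p:ℝ)⁻¹ := by
  have h1 := one_lt_castp hp
  have hp0 : (0:ℝ) < (p:ℝ) := by linarith
  have hcast : ((p - 1 : ℕ) : ℝ) = (p:ℝ) - 1 := by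
    have : 1 ≤ p := by omega
    push_cast [this]
    ring
  rw [rho, ← Real.rpow_natCast ((p:ℝ) ^ (-1 / ((p:ℝ) - 1))) (p - 1), ← Real.rpow_mul hp0.le,
    hcast]
  have hne : (p:ℝ) - 1 ≠ 0 := by linarith
  have : -1 / ((p:ℝ) - 1) * ((p:ℝ) - 1) = -1 := by field_simp
  rw [this]
  exact Real.rpow_neg_one _

lemma p_mul_rho_pow {p : ℕ} (hp : 2 ≤ p) : (p:ℝ) * rho p ^ p = rho p := by
  have h : rho p ^ p = rho p ^ (p - 1) * rho p := by
    rw [← pow_succ]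
    congr 1
    omega
  have hp0 : (0:ℝ) < (p:ℝ) := by linarith [one_lt_castp hp]
  rw [h, rho_pow_pred hp]
  field_simp

section Tprod

variable {K : Type*} [NormedField K] {R : ℕ → ℝ} {c : ℕ → K}

lemma norm_one_sub_of_lt (na : ∀ x y : K, ‖x + y‖ ≤ max ‖x‖ ‖y‖) {u : K} (h : ‖u‖ < 1) :
    ‖1 - u‖ = 1 := by
  have := na_sub_eq na (x := (1:K)) (y := u) (by simpa using h)
  simpa using this

lemma norm_one_sub_le (na : ∀ x y : K, ‖x + y‖ ≤ max ‖x‖ ‖y‖) (u : K) :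
    ‖1 - u‖ ≤ max 1 ‖u‖ := by
  simpa using na_sub na 1 u

lemma norm_div_c (hc : ∀ j, 1 ≤ j → ‖c j‖ = R j) (z : K) (j : ℕ) :
    ‖z / c (j + 1)‖ = ‖z‖ / R (j + 1) := by
  rw [norm_div, hc (j + 1) (by omega)]

lemma multipliable_factors [CompleteSpace K]
    (na : ∀ x y : K, ‖x + y‖ ≤ max ‖x‖ ‖y‖)
    (hc : ∀ j, 1 ≤ j → ‖c j‖ = R j)
    (htop : Filter.Tendsto R Filter.atTop Filter.atTop) (z : K) :
    Multipliable (fun j : ℕ => 1 - z / c (j + 1)) := by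
  set F : ℕ → K := fun j => 1 - z / c (j + 1) with hF
  suffices hcs : CauchySeq (fun s : Finset ℕ => ∏ b ∈ s, F b) by
    obtain ⟨a, ha⟩ := cauchySeq_tendsto_of_complete hcs
    exact ⟨a, ha⟩
  rw [Metric.cauchySeq_iff]
  intro ε hε
  obtain ⟨N₀, hN₀⟩ := Filter.eventually_atTop.mp (Filter.tendsto_atTop.mp htop (‖z‖ + 1))
  set C : ℝ := ‖∏ j ∈ Finset.range N₀, F j‖ with hC
  have hC0 : 0 ≤ C := norm_nonneg _
  set ε' : ℝ := min (ε / (2 * (C + 1))) 1 with hε'def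
  have hε'pos : 0 < ε' := lt_min (div_pos hε (by linarith)) one_pos
  obtain ⟨N₁', hN₁'⟩ := Filter.eventually_atTop.mp
    (Filter.tendsto_atTop.mp htop (max (‖z‖ + 1) ((‖z‖ + 1) / ε')))
  set N₁ : ℕ := max N₀ N₁' with hN₁def
  have hbig : ∀ j : ℕ, N₀ ≤ j → (‖z‖ + 1) ≤ R (j + 1) := by
    intro j hj
    exact hN₀ (j + 1) (by omega)
  have hRpos : ∀ j : ℕ, N₀ ≤ j → 0 < R (j + 1) := by
    intro j hj
    have := hbig j hj
    have h0 : (0:ℝ) ≤ ‖z‖ := norm_nonneg _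
    linarith
  have hflt : ∀ j : ℕ, N₀ ≤ j → ‖z / c (j + 1)‖ < 1 := by
    intro j hj
    rw [norm_div_c hc]
    rw [div_lt_one (hRpos j hj)]
    have := hbig j hj
    linarith
  have hfone : ∀ j : ℕ, N₀ ≤ j → ‖F j‖ = 1 := by
    intro j hj
    exact norm_one_sub_of_lt na (hflt j hj)
  have hsmall : ∀ j : ℕ, N₁ ≤ j → ‖z / c (j + 1)‖ ≤ ε' := by
    intro j hj
    have hj0 : N₀ ≤ j := le_trans (le_max_left _ _) hj
    have h2 := hN₁' (j + 1) (by
      have : N₁' ≤ j := le_trans (le_max_right _ _) hj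
      omega)
    have h4 : (‖z‖ + 1) / ε' ≤ R (j + 1) := le_trans (le_max_right _ _) h2
    have h5 : ‖z‖ + 1 ≤ ε' * R (j + 1) := by
      rw [div_le_iff₀ hε'pos] at h4
      linarith [h4]
    rw [norm_div_c hc, div_le_iff₀ (hRpos j hj0)]
    have h0 : (0:ℝ) ≤ ‖z‖ := norm_nonneg _
    linarith
  have hnear : ∀ s : Finset ℕ, (∀ j ∈ s, N₁ ≤ j) → ‖(∏ j ∈ s, F j) - 1‖ ≤ ε' := by
    intro s hs
    have := na_prod_diff na s F (fun _ => (1:K)) (fun _ => (1:ℝ)) hε'pos.le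
      (fun j hj => by
        rw [hfone j (le_trans (le_max_left _ _) (hs j hj))])
      (fun j hj => by simp)
      (fun j hj => by
        have hFj : F j - 1 = -(z / c (j + 1)) := by
          show (1 - z / c (j + 1)) - 1 = _
          ring
        rw [hFj, norm_neg, mul_one]
        exact hsmall j (hs j hj))
    simpa using this
  refine ⟨Finset.range N₁, fun s hs t ht => ?_⟩
  have hsub : ∀ u : Finset ℕ, Finset.range N₁ ≤ u →
      ∏ j ∈ u, F j = (∏ j ∈ Finset.range N₁, F j) * ∏ j ∈ u \ Finset.range N₁, F j := by
    intro u hu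
    rw [← Finset.prod_sdiff hu, mul_comm]
  have houter : ∀ u : Finset ℕ, Finset.range N₁ ≤ u → ∀ j ∈ u \ Finset.range N₁, N₁ ≤ j := by
    intro u hu j hj
    rw [Finset.mem_sdiff, Finset.mem_range] at hj
    omega
  rw [dist_eq_norm, hsub s hs, hsub t ht, ← mul_sub, norm_mul]
  have hCN : ‖∏ j ∈ Finset.range N₁, F j‖ = C := by
    rw [norm_prod, ← Finset.prod_range_mul_prod_Ico (fun j => ‖F j‖) (le_max_left N₀ N₁'), ← norm_prod]
    have : ∏ j ∈ Finset.Ico N₀ N₁, ‖F j‖ = 1 := by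
      apply Finset.prod_eq_one
      intro j hj
      rw [Finset.mem_Ico] at hj
      exact hfone j hj.1
    rw [this, mul_one]
  have hdiff : ‖(∏ j ∈ s \ Finset.range N₁, F j) - ∏ j ∈ t \ Finset.range N₁, F j‖ ≤ ε' := by
    have h1 := hnear _ (houter s hs)
    have h2 := hnear _ (houter t ht)
    have key : (∏ j ∈ s \ Finset.range N₁, F j) - ∏ j ∈ t \ Finset.range N₁, F j
        = ((∏ j ∈ s \ Finset.range N₁, F j) - 1) - ((∏ j ∈ t \ Finset.range N₁, F j) - 1) := by
      ring
    rw [key]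
    exact le_trans (na_sub na _ _) (max_le h1 h2)
  rw [hCN]
  have : C * ‖(∏ j ∈ s \ Finset.range N₁, F j) - ∏ j ∈ t \ Finset.range N₁, F j‖
      ≤ (C + 1) * (ε / (2 * (C + 1))) := by
    apply mul_le_mul (by linarith) (le_trans hdiff (min_le_left _ _)) (norm_nonneg _) (by linarith)
  have heq : (C + 1) * (ε / (2 * (C + 1))) = ε / 2 := by
    field_simp
  rw [heq] at this
  linarith

end Tprod

section TprodEst

variable {K : Type*} [NormedField K] {R : ℕ → ℝ} {c : ℕ → K}

lemma prod_B_le {B : ℕ → ℝ} {N : ℕ} (hB1 : ∀ j, 1 ≤ B j) (hBeq : ∀ j, N ≤ j → B j = 1) :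
    ∀ n, ∏ j ∈ Finset.range n, B j ≤ ∏ j ∈ Finset.range N, B j := by
  intro n
  rcases le_total n N with h | h
  · rw [← Finset.prod_range_mul_prod_Ico B h]
    have h1 : (1:ℝ) ≤ ∏ j ∈ Finset.Ico n N, B j := by
      calc (1:ℝ) = ∏ _j ∈ Finset.Ico n N, (1:ℝ) := by simp
        _ ≤ ∏ j ∈ Finset.Ico n N, B j :=
            Finset.prod_le_prod (by simp) (fun j _ => hB1 j)
    have h0 : 0 ≤ ∏ j ∈ Finset.range n, B j :=
      Finset.prod_nonneg (fun j _ => le_trans zero_le_one (hB1 j))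
    exact le_mul_of_one_le_right h0 h1
  · rw [← Finset.prod_range_mul_prod_Ico B h]
    have : ∏ j ∈ Finset.Ico N n, B j = 1 :=
      Finset.prod_eq_one (fun j hj => hBeq j (Finset.mem_Ico.1 hj).1)
    rw [this, mul_one]

lemma tprod_tendsto [CompleteSpace K]
    (na : ∀ x y : K, ‖x + y‖ ≤ max ‖x‖ ‖y‖)
    (hc : ∀ j, 1 ≤ j → ‖c j‖ = R j)
    (htop : Filter.Tendsto R Filter.atTop Filter.atTop) (z : K) :
    Filter.Tendsto (fun n => ∏ j ∈ Finset.range n, (1 - z / c (j + 1)))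
      Filter.atTop (nhds (∏' j : ℕ, (1 - z / c (j + 1)))) :=
  (multipliable_factors na hc htop z).hasProd.tendsto_prod_nat

lemma tprod_norm_eq [CompleteSpace K]
    (na : ∀ x y : K, ‖x + y‖ ≤ max ‖x‖ ‖y‖)
    (hc : ∀ j, 1 ≤ j → ‖c j‖ = R j)
    (htop : Filter.Tendsto R Filter.atTop Filter.atTop) (z : K) (N : ℕ)
    (hN : ∀ j, N ≤ j → ‖z‖ < R (j + 1)) :
    ‖∏' j : ℕ, (1 - z / c (j + 1))‖ = ∏ j ∈ Finset.range N, ‖1 - z / c (j + 1)‖ := by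
  have hnorm := (tprod_tendsto na hc htop z).norm
  have heq : ∀ n, N ≤ n → ‖∏ j ∈ Finset.range n, (1 - z / c (j + 1))‖
      = ∏ j ∈ Finset.range N, ‖1 - z / c (j + 1)‖ := by
    intro n hn
    rw [norm_prod, ← Finset.prod_range_mul_prod_Ico (fun j => ‖1 - z / c (j + 1)‖) hn]
    have : ∏ j ∈ Finset.Ico N n, ‖1 - z / c (j + 1)‖ = 1 := by
      apply Finset.prod_eq_one
      intro j hj
      apply norm_one_sub_of_lt na
      rw [norm_div_c hc]
      have hRpos : 0 < R (j + 1) := by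
        have h1 := hN j (Finset.mem_Ico.1 hj).1
        have h0 : (0:ℝ) ≤ ‖z‖ := norm_nonneg _
        linarith
      rw [div_lt_one hRpos]
      exact hN j (Finset.mem_Ico.1 hj).1
    rw [this, mul_one]
  have hconst : Filter.Tendsto (fun n => ‖∏ j ∈ Finset.range n, (1 - z / c (j + 1))‖)
      Filter.atTop (nhds (∏ j ∈ Finset.range N, ‖1 - z / c (j + 1)‖)) := by
    apply Filter.Tendsto.congr' _ tendsto_const_nhds
    filter_upwards [Filter.eventually_ge_atTop N] with n hn
    exact (heq n hn).symm
  exact tendsto_nhds_unique hnorm hconst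

lemma tprod_norm_le [CompleteSpace K]
    (na : ∀ x y : K, ‖x + y‖ ≤ max ‖x‖ ‖y‖)
    (hc : ∀ j, 1 ≤ j → ‖c j‖ = R j)
    (htop : Filter.Tendsto R Filter.atTop Filter.atTop) (z : K) (N : ℕ) (B : ℕ → ℝ)
    (hB1 : ∀ j, 1 ≤ B j) (hBeq : ∀ j, N ≤ j → B j = 1)
    (hFB : ∀ j, ‖1 - z / c (j + 1)‖ ≤ B j) :
    ‖∏' j : ℕ, (1 - z / c (j + 1))‖ ≤ ∏ j ∈ Finset.range N, B j := by
  apply le_of_tendsto (tprod_tendsto na hc htop z).norm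
  filter_upwards with n
  calc ‖∏ j ∈ Finset.range n, (1 - z / c (j + 1))‖ ≤ ∏ j ∈ Finset.range n, B j :=
        na_prod_le _ _ _ (fun j _ => hFB j)
    _ ≤ ∏ j ∈ Finset.range N, B j := prod_B_le hB1 hBeq n

lemma tprod_diff [CompleteSpace K]
    (na : ∀ x y : K, ‖x + y‖ ≤ max ‖x‖ ‖y‖)
    (hc : ∀ j, 1 ≤ j → ‖c j‖ = R j)
    (htop : Filter.Tendsto R Filter.atTop Filter.atTop) (z w : K) (N : ℕ) (B : ℕ → ℝ)
    {ε : ℝ} (hε : 0 ≤ ε)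
    (hB1 : ∀ j, 1 ≤ B j) (hBeq : ∀ j, N ≤ j → B j = 1)
    (hFB : ∀ j, ‖1 - z / c (j + 1)‖ ≤ B j)
    (hGB : ∀ j, ‖1 - w / c (j + 1)‖ ≤ B j)
    (hd : ∀ j, ‖z / c (j + 1) - w / c (j + 1)‖ ≤ ε * B j) :
    ‖(∏' j : ℕ, (1 - z / c (j + 1))) - ∏' j : ℕ, (1 - w / c (j + 1))‖
      ≤ ε * ∏ j ∈ Finset.range N, B j := by
  have hts := (tprod_tendsto na hc htop z).sub (tprod_tendsto na hc htop w)
  apply le_of_tendsto hts.norm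
  filter_upwards with n
  have h1 : ‖(∏ j ∈ Finset.range n, (1 - z / c (j + 1)))
      - ∏ j ∈ Finset.range n, (1 - w / c (j + 1))‖ ≤ ε * ∏ j ∈ Finset.range n, B j := by
    apply na_prod_diff na _ _ _ _ hε (fun j _ => hFB j) (fun j _ => hGB j)
    intro j _
    have : (1 - z / c (j + 1)) - (1 - w / c (j + 1)) = -(z / c (j + 1) - w / c (j + 1)) := by ring
    rw [this, norm_neg]
    exact hd j
  exact le_trans h1 (mul_le_mul_of_nonneg_left (prod_B_le hB1 hBeq n) hε)

end TprodEst

section PadicFacts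

variable {p : ℕ} [Fact p.Prime] {K : Type*} [NormedField K] [Algebra ℚ_[p] K]

lemma norm_pK (hK : IsCp p K) : ‖(p : K)‖ = (p:ℝ)⁻¹ := by
  have h := hK.norm_extends (p : ℚ_[p])
  rw [map_natCast] at h
  rw [h, Padic.norm_p]

lemma norm_natK (hK : IsCp p K) (n : ℕ) : ‖(n : K)‖ ≤ 1 := by
  have h := hK.norm_extends (n : ℚ_[p])
  rw [map_natCast] at h
  rw [h]
  have := Padic.norm_int_le_one (p := p) (n : ℤ)
  push_cast at this
  exact this

lemma norm_chooseK (hK : IsCp p K) {j : ℕ} (h1 : 1 ≤ j) (h2 : j < p) :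
    ‖(Nat.choose p j : K)‖ ≤ (p:ℝ)⁻¹ := by
  obtain ⟨d, hd⟩ := (Fact.out : p.Prime).dvd_choose_self (by omega) h2
  rw [hd]
  push_cast
  rw [norm_mul, norm_pK hK]
  have h3 : (0:ℝ) ≤ (p:ℝ)⁻¹ := by positivity
  calc (p:ℝ)⁻¹ * ‖(d : K)‖ ≤ (p:ℝ)⁻¹ * 1 :=
        mul_le_mul_of_nonneg_left (norm_natK hK d) h3
    _ = (p:ℝ)⁻¹ := mul_one _

end PadicFacts

section PowDiff

variable {K : Type*} [NormedField K]

lemma pow_diff_crude (na : ∀ x y : K, ‖x + y‖ ≤ max ‖x‖ ‖y‖) {x y : K} {t : ℝ}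
    (hx : ‖x‖ ≤ t) (hy : ‖y‖ ≤ t) (n : ℕ) :
    ‖y ^ n - x ^ n‖ ≤ ‖y - x‖ * t ^ (n - 1) := by
  have ht0 : 0 ≤ t := le_trans (norm_nonneg _) hx
  have hgeom := geom_sum₂_mul y x n
  rw [← hgeom, norm_mul, mul_comm]
  apply mul_le_mul_of_nonneg_left _ (norm_nonneg _)
  apply na_sum na _ _ (by positivity)
  intro i hi
  rw [Finset.mem_range] at hi
  rw [norm_mul, norm_pow, norm_pow]
  calc ‖y‖ ^ i * ‖x‖ ^ (n - 1 - i) ≤ t ^ i * t ^ (n - 1 - i) :=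
        mul_le_mul (pow_le_pow_left₀ (norm_nonneg _) hy i)
          (pow_le_pow_left₀ (norm_nonneg _) hx _) (by positivity) (by positivity)
    _ = t ^ (n - 1) := by
        rw [← pow_add]
        congr 1
        omega

variable {p : ℕ} [Fact p.Prime] [Algebra ℚ_[p] K]

lemma pow_diff_fine (na : ∀ x y : K, ‖x + y‖ ≤ max ‖x‖ ‖y‖) (hK : IsCp p K)
    {x y : K} (hd : ‖y - x‖ ≤ rho p * ‖x‖) :
    ‖y ^ p - x ^ p‖ ≤ ‖y - x‖ * ‖x‖ ^ (p - 1) * (p:ℝ)⁻¹ := by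
  have hp2 : 2 ≤ p := (Fact.out : p.Prime).two_le
  have hρ0 : 0 < rho p := rho_pos hp2
  have hρ1 : rho p < 1 := rho_lt_one hp2
  set h : K := y - x with hh
  set δ : ℝ := ‖y - x‖ with hδ
  have hδ0 : 0 ≤ δ := norm_nonneg _
  have hx0 : 0 ≤ ‖x‖ := norm_nonneg _
  have hkey : y ^ p - x ^ p = ∑ k ∈ Finset.range p, x ^ k * h ^ (p - k) * (Nat.choose p k : K) := by
    have hy : y = x + h := by rw [hh]; ring
    rw [hy, add_pow, Finset.sum_range_succ]
    simp [Nat.choose_self]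
  rw [hkey]
  apply na_sum na _ _ (by positivity)
  intro k hk
  rw [Finset.mem_range] at hk
  rw [norm_mul, norm_mul, norm_pow, norm_pow]
  rcases Nat.eq_zero_or_pos k with hk0 | hkpos
  · subst hk0
    simp only [pow_zero, one_mul, Nat.choose_zero_right, Nat.cast_one, norm_one, mul_one,
      Nat.sub_zero]
    have h1 : ‖h‖ ^ p = δ * δ ^ (p - 1) := by
      rw [← hδ, ← pow_succ']
      congr 1
      omega
    rw [h1]
    have h2 : δ ^ (p - 1) ≤ (rho p * ‖x‖) ^ (p - 1) :=
      pow_le_pow_left₀ hδ0 hd _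
    have h3 : (rho p * ‖x‖) ^ (p - 1) = (p:ℝ)⁻¹ * ‖x‖ ^ (p - 1) := by
      rw [mul_pow, rho_pow_pred hp2]
    calc δ * δ ^ (p - 1) ≤ δ * ((p:ℝ)⁻¹ * ‖x‖ ^ (p - 1)) := by
          rw [← h3]; exact mul_le_mul_of_nonneg_left h2 hδ0
      _ = δ * ‖x‖ ^ (p - 1) * (p:ℝ)⁻¹ := by ring
  · -- 1 ≤ k < p
    have hC : ‖(Nat.choose p k : K)‖ ≤ (p:ℝ)⁻¹ := norm_chooseK hK hkpos hk
    have hδx : δ ≤ ‖x‖ := le_trans hd (by nlinarith)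
    have hmain : ‖x‖ ^ k * ‖h‖ ^ (p - k) ≤ ‖x‖ ^ (p - 1) * δ := by
      have h1 : ‖h‖ ^ (p - k) = δ ^ (p - k - 1) * δ := by
        rw [← hδ, ← pow_succ]
        congr 1
        omega
      have h2 : δ ^ (p - k - 1) ≤ ‖x‖ ^ (p - k - 1) := pow_le_pow_left₀ hδ0 hδx _
      calc ‖x‖ ^ k * ‖h‖ ^ (p - k) = ‖x‖ ^ k * δ ^ (p - k - 1) * δ := by rw [h1]; ring
        _ ≤ ‖x‖ ^ k * ‖x‖ ^ (p - k - 1) * δ := by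
            apply mul_le_mul_of_nonneg_right _ hδ0
            exact mul_le_mul_of_nonneg_left h2 (by positivity)
        _ = ‖x‖ ^ (p - 1) * δ := by
            rw [← pow_add]
            congr 2
            omega
    calc ‖x‖ ^ k * ‖h‖ ^ (p - k) * ‖(Nat.choose p k : K)‖
        ≤ (‖x‖ ^ (p - 1) * δ) * (p:ℝ)⁻¹ := by
          apply mul_le_mul hmain hC (norm_nonneg _) (by positivity)
      _ = δ * ‖x‖ ^ (p - 1) * (p:ℝ)⁻¹ := by ring

end PowDiff

section MemFacts

variable {K : Type*} [NormedField K] {R : ℕ → ℝ} {c : ℕ → K}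

lemma mem_B0_iff {z : K} : z ∈ Bset R c 0 ↔ ‖z‖ < 1 := by
  simp only [Bset, if_pos rfl]
  exact Iff.rfl

lemma mem_Bk_iff {k : ℕ} (hk : k ≠ 0) {z : K} : z ∈ Bset R c k ↔ ‖z - c k‖ < R k := by
  simp only [Bset, if_neg hk]
  exact Iff.rfl

lemma notmem_of_A {z : K} (hz : z ∈ Aset R c) (j : ℕ) : z ∉ Bset R c j := by
  rw [Aset, Set.mem_compl_iff] at hz
  intro hj
  exact hz (Set.mem_iUnion.2 ⟨j, hj⟩)

lemma mem_A_of_notmem {z : K} (hz : ∀ j, z ∉ Bset R c j) : z ∈ Aset R c := by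
  rw [Aset, Set.mem_compl_iff]
  intro h
  obtain ⟨j, hj⟩ := Set.mem_iUnion.1 h
  exact hz j hj

lemma norm_ge_of_A {z : K} (hz : z ∈ Aset R c) : 1 ≤ ‖z‖ := by
  have h0 := notmem_of_A hz 0
  rw [mem_B0_iff] at h0
  exact le_of_not_gt h0

lemma norm_of_mem_Bk (na : ∀ x y : K, ‖x + y‖ ≤ max ‖x‖ ‖y‖)
    (hc : ∀ j, 1 ≤ j → ‖c j‖ = R j) {k : ℕ} (hk : 1 ≤ k) {z : K}
    (hz : z ∈ Bset R c k) : ‖z‖ = R k := by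
  have hck : ‖c k‖ = R k := hc k hk
  have h1 : ‖z - c k‖ < ‖c k‖ := by
    rw [hck]
    exact (mem_Bk_iff (by omega)).1 hz
  have h2 : ‖c k + (z - c k)‖ = ‖c k‖ := na_add_eq na h1
  rw [add_sub_cancel] at h2
  rw [h2, hck]

lemma trans_B0 (na : ∀ x y : K, ‖x + y‖ ≤ max ‖x‖ ‖y‖) {x y : K}
    (hx : x ∈ Bset R c 0) (hd : ‖y - x‖ < 1) : y ∈ Bset R c 0 := by
  rw [mem_B0_iff] at hx ⊢
  have h1 : y = x + (y - x) := by ring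
  rw [h1]
  exact lt_of_le_of_lt (na x (y - x)) (max_lt hx hd)

lemma trans_Bk (na : ∀ x y : K, ‖x + y‖ ≤ max ‖x‖ ‖y‖) {k : ℕ} (hk : 1 ≤ k) {x y : K}
    (hx : x ∈ Bset R c k) (hd : ‖y - x‖ < R k) : y ∈ Bset R c k := by
  rw [mem_Bk_iff (by omega)] at hx ⊢
  have h1 : y - c k = (x - c k) + (y - x) := by ring
  rw [h1]
  exact lt_of_le_of_lt (na _ _) (max_lt hx hd)

lemma trans_A (na : ∀ x y : K, ‖x + y‖ ≤ max ‖x‖ ‖y‖)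
    (hc : ∀ j, 1 ≤ j → ‖c j‖ = R j) {x y : K}
    (hx : x ∈ Aset R c) (hd : ‖y - x‖ < ‖x‖) : y ∈ Aset R c := by
  have hx1 : 1 ≤ ‖x‖ := norm_ge_of_A hx
  have hyx : ‖y‖ = ‖x‖ := by
    have h1 : y = x + (y - x) := by ring
    rw [h1]
    exact na_add_eq na hd
  apply mem_A_of_notmem
  intro j hj
  rcases Nat.eq_zero_or_pos j with h0 | hpos
  · subst h0
    rw [mem_B0_iff] at hj
    rw [hyx] at hj
    linarith
  · have hxj := notmem_of_A hx j
    rw [mem_Bk_iff (by omega)] at hj hxj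
    rcases le_or_gt ‖x‖ (R j) with hle | hlt
    · apply hxj
      have h1 : x - c j = (y - c j) - (y - x) := by ring
      rw [h1]
      exact lt_of_le_of_lt (na_sub na _ _) (max_lt hj (lt_of_lt_of_le hd hle))
    · have h2 : ‖y - c j‖ = ‖y‖ := by
        apply na_sub_eq na
        rw [hc j hpos, hyx]
        exact hlt
      rw [h2, hyx] at hj
      exact absurd hj (not_lt.2 hlt.le)

end MemFacts

section ValueFacts

variable {p : ℕ} [Fact p.Prime] {K : Type*} [NormedField K] {R : ℕ → ℝ} {c : ℕ → K}

lemma fc_sub (hpK : ‖(p:K)‖ = (p:ℝ)⁻¹) (x y : K) :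
    fc p c y - fc p c x
      = ((y ^ p - x ^ p) * (∏' j : ℕ, (1 - y / c (j + 1)))
          + x ^ p * ((∏' j : ℕ, (1 - y / c (j + 1))) - ∏' j : ℕ, (1 - x / c (j + 1)))) / (p : K) := by
  have hp2 : 2 ≤ p := (Fact.out : p.Prime).two_le
  have hpne : (p : K) ≠ 0 := by
    intro h
    rw [h, norm_zero] at hpK
    have : (0:ℝ) < (p:ℝ)⁻¹ := by
      have : (0:ℝ) < (p:ℝ) := by
        have : (2:ℝ) ≤ (p:ℝ) := by exact_mod_cast hp2
        linarith
      positivity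
    linarith [hpK.symm.le.trans_lt this]
  rw [fc, fc]
  field_simp
  ring

lemma norm_fc (hpK : ‖(p:K)‖ = (p:ℝ)⁻¹) (z : K) :
    ‖fc p c z‖ = (p:ℝ) * ‖z‖ ^ p * ‖∏' j : ℕ, (1 - z / c (j + 1))‖ := by
  have hp2 : 2 ≤ p := (Fact.out : p.Prime).two_le
  have hp0 : (p:ℝ) ≠ 0 := by
    have : (2:ℝ) ≤ (p:ℝ) := by exact_mod_cast hp2
    linarith
  rw [fc, norm_mul, norm_div, norm_pow, hpK, div_eq_mul_inv, inv_inv]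
  ring

lemma norm_fc_B0 [CompleteSpace K]
    (na : ∀ x y : K, ‖x + y‖ ≤ max ‖x‖ ‖y‖)
    (hc : ∀ j, 1 ≤ j → ‖c j‖ = R j)
    (htop : Filter.Tendsto R Filter.atTop Filter.atTop)
    (hRbig : ∀ j : ℕ, (1:ℝ) < R (j + 1))
    (hpK : ‖(p:K)‖ = (p:ℝ)⁻¹) {z : K} (hz : ‖z‖ < 1) :
    ‖fc p c z‖ = (p:ℝ) * ‖z‖ ^ p := by
  rw [norm_fc hpK, tprod_norm_eq na hc htop z 0 (fun j _ => lt_trans hz (hRbig j))]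
  simp

lemma factor_eq_notB (na : ∀ x y : K, ‖x + y‖ ≤ max ‖x‖ ‖y‖)
    (hc : ∀ j, 1 ≤ j → ‖c j‖ = R j)
    (hRpos : ∀ j, 1 ≤ j → 0 < R j) {z : K} {j : ℕ} (hj : 1 ≤ j)
    (hz : z ∉ Bset R c j) : ‖1 - z / c j‖ = max 1 (‖z‖ / R j) := by
  have hck : ‖c j‖ = R j := hc j hj
  have hc0 : c j ≠ 0 := by
    intro h
    rw [h, norm_zero] at hck
    exact absurd hck.symm (ne_of_gt (hRpos j hj))
  have hfac : 1 - z / c j = (c j - z) / c j := by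
    field_simp
  rw [hfac, norm_div, hck]
  have hnb : R j ≤ ‖z - c j‖ := by
    rw [mem_Bk_iff (by omega)] at hz
    exact le_of_not_gt hz
  rcases le_or_gt ‖z‖ (R j) with hle | hlt
  · have hub : ‖c j - z‖ ≤ R j := by
      have h1 := na_sub na (c j) z
      rw [hck] at h1
      exact h1.trans (max_le le_rfl hle)
    have heq : ‖c j - z‖ = R j := le_antisymm hub (by rw [norm_sub_rev]; exact hnb)
    rw [heq, div_self (ne_of_gt (hRpos j hj))]
    rw [max_eq_left]
    rw [div_le_one (hRpos j hj)]
    exact hle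
  · have heq : ‖c j - z‖ = ‖z‖ := by
      rw [norm_sub_rev]
      exact na_sub_eq na (by rw [hck]; exact hlt)
    rw [heq, max_eq_right]
    rw [le_div_iff₀ (hRpos j hj), one_mul]
    exact hlt.le

lemma norm_fc_A [CompleteSpace K]
    (na : ∀ x y : K, ‖x + y‖ ≤ max ‖x‖ ‖y‖)
    (hc : ∀ j, 1 ≤ j → ‖c j‖ = R j)
    (htop : Filter.Tendsto R Filter.atTop Filter.atTop)
    (hRpos : ∀ j, 1 ≤ j → 0 < R j)
    (hpK : ‖(p:K)‖ = (p:ℝ)⁻¹) {z : K} (hz : z ∈ Aset R c)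
    (N : ℕ) (hN : ∀ j, N ≤ j → ‖z‖ < R (j + 1)) :
    ‖fc p c z‖ = (p:ℝ) * ‖z‖ ^ p * ∏ j ∈ Finset.range N, max 1 (‖z‖ / R (j + 1)) := by
  rw [norm_fc hpK, tprod_norm_eq na hc htop z N hN]
  congr 1
  apply Finset.prod_congr rfl
  intro j _
  exact factor_eq_notB na hc hRpos (by omega) (notmem_of_A hz (j + 1))

lemma lam_eq (hstrict : ∀ a b, 1 ≤ a → a < b → R a < R b)
    (hRpos : ∀ j, 1 ≤ j → 0 < R j) {k : ℕ} (hk : 1 ≤ k) (hp2 : 2 ≤ p) :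
    lam p R k = (p:ℝ) * R k ^ (p - 1) * ∏ j ∈ Finset.range k, max 1 (R k / R (j + 1)) := by
  obtain ⟨k', rfl⟩ : ∃ k', k = k' + 1 := ⟨k - 1, by omega⟩
  have hsinf : sInf {j : ℕ | 1 ≤ j ∧ R (k' + 1) ≤ R j} = k' + 1 := by
    apply le_antisymm
    · exact Nat.sInf_le ⟨by omega, le_rfl⟩
    · refine le_csInf ⟨k' + 1, ⟨by omega, le_rfl⟩⟩ ?_
      intro j hj
      by_contra hlt
      push_neg at hlt
      exact absurd hj.2 (not_le.2 (hstrict j (k' + 1) hj.1 hlt))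
  have hA : (0:ℝ) < ∏ i ∈ Finset.Icc 1 k', R i :=
    Finset.prod_pos (fun i hi => hRpos i (Finset.mem_Icc.1 hi).1)
  have hRk : 0 < R (k' + 1) := hRpos _ (by omega)
  have hle : ∀ j ∈ Finset.range (k' + 1), R (j + 1) ≤ R (k' + 1) := by
    intro j hj
    rw [Finset.mem_range] at hj
    rcases Nat.lt_or_ge (j + 1) (k' + 1) with h | h
    · exact (hstrict (j + 1) (k' + 1) (by omega) h).le
    · have : j + 1 = k' + 1 := by omega
      rw [this]
  have hIcc : ∏ j ∈ Finset.range (k' + 1), R (j + 1)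
      = (∏ i ∈ Finset.Icc 1 k', R i) * R (k' + 1) := by
    rw [Finset.prod_range_succ]
    congr 1
    rw [← Finset.Ico_add_one_right_eq_Icc, Finset.prod_Ico_eq_prod_range]
    apply Finset.prod_congr
    · congr 1
    · intro j _
      congr 1
      omega
  have hmax : ∏ j ∈ Finset.range (k' + 1), max 1 (R (k' + 1) / R (j + 1))
      = ∏ j ∈ Finset.range (k' + 1), R (k' + 1) / R (j + 1) := by
    apply Finset.prod_congr rfl
    intro j hj
    rw [max_eq_right]
    rw [le_div_iff₀ (hRpos (j + 1) (by omega)), one_mul]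
    exact hle j hj
  have hRposall : ∀ j ∈ Finset.range (k' + 1), (0:ℝ) < R (j + 1) :=
    fun j _ => hRpos (j + 1) (by omega)
  rw [lam, phi]
  simp only [hsinf]
  rw [hmax, Finset.prod_div_distrib, Finset.prod_const, hIcc]
  have hcard : (Finset.range (k' + 1)).card = k' + 1 := Finset.card_range _
  rw [hcard]
  have he1 : p + (k' + 1) - 1 = (p - 1) + (k' + 1) := by omega
  rw [he1, pow_add, pow_succ]
  have hAne : (∏ i ∈ Finset.Icc 1 k', R i) ≠ 0 := ne_of_gt hA
  have hRne : R (k' + 1) ≠ 0 := ne_of_gt hRk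
  simp only [Nat.add_sub_cancel]
  field_simp

end ValueFacts

section StepLemmas

variable {p : ℕ} [Fact p.Prime] {K : Type*} [NormedField K] [Algebra ℚ_[p] K] {R : ℕ → ℝ} {c : ℕ → K}

lemma one_le_finset_prod {ι : Type*} (s : Finset ι) (B : ι → ℝ) (h : ∀ j ∈ s, 1 ≤ B j) :
    1 ≤ ∏ j ∈ s, B j := by
  calc (1:ℝ) = ∏ _j ∈ s, (1:ℝ) := by simp
    _ ≤ ∏ j ∈ s, B j := Finset.prod_le_prod (by simp) h

lemma lam_ge_one (hstrict : ∀ a b, 1 ≤ a → a < b → R a < R b)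
    (hRpos : ∀ j, 1 ≤ j → 0 < R j) (hRbig : ∀ j : ℕ, (1:ℝ) < R (j + 1))
    {k : ℕ} (hk : 1 ≤ k) (hp2 : 2 ≤ p) : 1 ≤ lam p R k := by
  rw [lam_eq hstrict hRpos hk hp2]
  have h1 : (1:ℝ) ≤ ∏ j ∈ Finset.range k, max 1 (R k / R (j + 1)) :=
    one_le_finset_prod _ _ (fun j _ => le_max_left _ _)
  have h2 : (1:ℝ) ≤ R k ^ (p - 1) := by
    apply one_le_pow₀
    obtain ⟨k', rfl⟩ : ∃ k', k = k' + 1 := ⟨k - 1, by omega⟩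
    exact (hRbig k').le
  have h3 : (1:ℝ) ≤ (p:ℝ) := by
    have : (2:ℝ) ≤ (p:ℝ) := by exact_mod_cast hp2
    linarith
  have h4 : (1:ℝ) ≤ (p:ℝ) * R k ^ (p - 1) := by nlinarith
  linarith [mul_le_mul h4 h1 zero_le_one
    (by linarith : (0:ℝ) ≤ (p:ℝ) * R k ^ (p - 1))]

lemma step_A [CompleteSpace K]
    (na : ∀ x y : K, ‖x + y‖ ≤ max ‖x‖ ‖y‖)
    (hc : ∀ j, 1 ≤ j → ‖c j‖ = R j)
    (htop : Filter.Tendsto R Filter.atTop Filter.atTop)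
    (hRpos : ∀ j, 1 ≤ j → 0 < R j)
    (hpK : ‖(p:K)‖ = (p:ℝ)⁻¹)
    {x y : K} (hxA : x ∈ Aset R c) (hd : ‖y - x‖ < ‖x‖) :
    ‖fc p c y - fc p c x‖ ≤ ‖y - x‖ / ‖x‖ * ‖fc p c x‖ := by
  have hp2 : 2 ≤ p := (Fact.out : p.Prime).two_le
  have hpR : (0:ℝ) < (p:ℝ) := by
    have : (2:ℝ) ≤ (p:ℝ) := by exact_mod_cast hp2
    linarith
  have ht1 : 1 ≤ ‖x‖ := norm_ge_of_A hxA
  have ht0 : 0 < ‖x‖ := lt_of_lt_of_le one_pos ht1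
  have hδ0 : (0:ℝ) ≤ ‖y - x‖ := norm_nonneg _
  have hyt : ‖y‖ ≤ ‖x‖ := by
    have h1 : y = x + (y - x) := by ring
    rw [h1]
    exact (na x (y - x)).trans (max_le le_rfl hd.le)
  obtain ⟨N, hN⟩ : ∃ N, ∀ j, N ≤ j → ‖x‖ < R (j + 1) := by
    obtain ⟨N0, h0⟩ := Filter.eventually_atTop.mp (Filter.tendsto_atTop.mp htop (‖x‖ + 1))
    exact ⟨N0, fun j hj => lt_of_lt_of_le (by linarith) (h0 (j + 1) (by omega))⟩
  set B : ℕ → ℝ := fun j => max 1 (‖x‖ / R (j + 1)) with hB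
  have hB1 : ∀ j, 1 ≤ B j := fun j => le_max_left _ _
  have hBeq : ∀ j, N ≤ j → B j = 1 := by
    intro j hj
    apply max_eq_left
    rw [div_le_one (hRpos (j + 1) (by omega))]
    exact (hN j hj).le
  set Q : ℝ := ∏ j ∈ Finset.range N, B j with hQ
  have hQ0 : 0 < Q := Finset.prod_pos (fun j _ => lt_of_lt_of_le one_pos (hB1 j))
  have hFy : ∀ j, ‖1 - y / c (j + 1)‖ ≤ B j := by
    intro j
    refine (norm_one_sub_le na _).trans ?_
    rw [norm_div_c hc]
    have hRj := hRpos (j + 1) (by omega)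
    show max 1 (‖y‖ / R (j + 1)) ≤ max 1 (‖x‖ / R (j + 1))
    gcongr
  have hFx : ∀ j, ‖1 - x / c (j + 1)‖ ≤ B j := by
    intro j
    refine (norm_one_sub_le na _).trans ?_
    rw [norm_div_c hc]
  have hPy : ‖∏' j : ℕ, (1 - y / c (j + 1))‖ ≤ Q :=
    tprod_norm_le na hc htop y N B hB1 hBeq hFy
  have hPdiff : ‖(∏' j : ℕ, (1 - y / c (j + 1))) - ∏' j : ℕ, (1 - x / c (j + 1))‖
      ≤ ‖y - x‖ / ‖x‖ * Q := by
    apply tprod_diff na hc htop y x N B (by positivity) hB1 hBeq hFy hFx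
    intro j
    have hRj := hRpos (j + 1) (by omega)
    have h1 : ‖y / c (j + 1) - x / c (j + 1)‖ = ‖y - x‖ / R (j + 1) := by
      rw [div_sub_div_same, norm_div_c hc]
    have h2 : ‖y - x‖ / ‖x‖ * (‖x‖ / R (j + 1)) = ‖y - x‖ / R (j + 1) := by
      field_simp
    rw [h1, ← h2]
    exact mul_le_mul_of_nonneg_left (le_max_right _ _) (by positivity)
  have hfcx : ‖fc p c x‖ = (p:ℝ) * ‖x‖ ^ p * Q :=
    norm_fc_A na hc htop hRpos hpK hxA N hN
  have hpow : ‖x‖ ^ p = ‖x‖ ^ (p - 1) * ‖x‖ := by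
    rw [← pow_succ]
    congr 1
    omega
  rw [fc_sub hpK, norm_div, hpK, div_eq_mul_inv, inv_inv]
  have hnum : ‖(y ^ p - x ^ p) * (∏' j : ℕ, (1 - y / c (j + 1)))
      + x ^ p * ((∏' j : ℕ, (1 - y / c (j + 1))) - ∏' j : ℕ, (1 - x / c (j + 1)))‖
      ≤ ‖y - x‖ * ‖x‖ ^ (p - 1) * Q := by
    refine (na _ _).trans (max_le ?_ ?_)
    · rw [norm_mul]
      exact mul_le_mul (pow_diff_crude na le_rfl hyt p) hPy (norm_nonneg _) (by positivity)
    · rw [norm_mul, norm_pow]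
      calc ‖x‖ ^ p * ‖(∏' j : ℕ, (1 - y / c (j + 1))) - ∏' j : ℕ, (1 - x / c (j + 1))‖
          ≤ ‖x‖ ^ p * (‖y - x‖ / ‖x‖ * Q) :=
            mul_le_mul_of_nonneg_left hPdiff (by positivity)
        _ = ‖y - x‖ * ‖x‖ ^ (p - 1) * Q := by
            rw [hpow]
            field_simp
  calc ‖(y ^ p - x ^ p) * (∏' j : ℕ, (1 - y / c (j + 1)))
      + x ^ p * ((∏' j : ℕ, (1 - y / c (j + 1))) - ∏' j : ℕ, (1 - x / c (j + 1)))‖ * (p:ℝ)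
      ≤ (‖y - x‖ * ‖x‖ ^ (p - 1) * Q) * (p:ℝ) :=
        mul_le_mul_of_nonneg_right hnum hpR.le
    _ = ‖y - x‖ / ‖x‖ * ((p:ℝ) * ‖x‖ ^ p * Q) := by
        rw [hpow]
        field_simp
    _ = ‖y - x‖ / ‖x‖ * ‖fc p c x‖ := by rw [hfcx]

lemma step_B0 [CompleteSpace K]
    (na : ∀ x y : K, ‖x + y‖ ≤ max ‖x‖ ‖y‖)
    (hc : ∀ j, 1 ≤ j → ‖c j‖ = R j)
    (htop : Filter.Tendsto R Filter.atTop Filter.atTop)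
    (hRbig : ∀ j : ℕ, (1:ℝ) < R (j + 1))
    (hRone : ∀ j : ℕ, R 1 ≤ R (j + 1))
    (hpR1 : (p:ℝ) < R 1)
    (hpK : ‖(p:K)‖ = (p:ℝ)⁻¹) (hK : IsCp p K)
    {x y : K} (hx1 : ‖x‖ < 1) (hd : ‖y - x‖ ≤ rho p * ‖x‖) :
    ‖fc p c y - fc p c x‖ ≤ ‖y - x‖ * ‖x‖ ^ (p - 1) := by
  have hp2 : 2 ≤ p := (Fact.out : p.Prime).two_le
  have hpR : (0:ℝ) < (p:ℝ) := by
    have : (2:ℝ) ≤ (p:ℝ) := by exact_mod_cast hp2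
    linarith
  have hρ0 : 0 < rho p := rho_pos hp2
  have hρ1 : rho p < 1 := rho_lt_one hp2
  have hx0 : (0:ℝ) ≤ ‖x‖ := norm_nonneg _
  have hδ0 : (0:ℝ) ≤ ‖y - x‖ := norm_nonneg _
  have hδx : ‖y - x‖ ≤ ‖x‖ := hd.trans (by nlinarith)
  have hR1pos : (0:ℝ) < R 1 := by linarith
  have hyx : ‖y‖ ≤ ‖x‖ := by
    have h1 : y = x + (y - x) := by ring
    rw [h1]
    exact (na x (y - x)).trans (max_le le_rfl hδx)
  have hFbound : ∀ (z : K), ‖z‖ ≤ ‖x‖ → ∀ j : ℕ, ‖1 - z / c (j + 1)‖ ≤ 1 := by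
    intro z hz j
    refine (norm_one_sub_le na _).trans ?_
    rw [norm_div_c hc]
    apply max_le le_rfl
    rw [div_le_one (by linarith [hRbig j])]
    linarith [hRbig j]
  have hPy : ‖∏' j : ℕ, (1 - y / c (j + 1))‖ ≤ 1 := by
    have := tprod_norm_le na hc htop y 0 (fun _ => (1:ℝ)) (fun _ => le_rfl)
      (fun _ _ => rfl) (hFbound y hyx)
    simpa using this
  have hPdiff : ‖(∏' j : ℕ, (1 - y / c (j + 1))) - ∏' j : ℕ, (1 - x / c (j + 1))‖
      ≤ ‖y - x‖ / R 1 := by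
    have := tprod_diff na hc htop y x 0 (fun _ => (1:ℝ))
      (ε := ‖y - x‖ / R 1) (by positivity) (fun _ => le_rfl) (fun _ _ => rfl)
      (hFbound y hyx) (hFbound x le_rfl) ?_
    · simpa using this
    · intro j
      have h1 : ‖y / c (j + 1) - x / c (j + 1)‖ = ‖y - x‖ / R (j + 1) := by
        rw [div_sub_div_same, norm_div_c hc]
      rw [h1, mul_one]
      apply div_le_div_of_nonneg_left hδ0 hR1pos (hRone j)
  rw [fc_sub hpK, norm_div, hpK, div_eq_mul_inv, inv_inv]
  have hxR1 : ‖x‖ / R 1 ≤ (p:ℝ)⁻¹ := by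
    rw [div_le_iff₀ hR1pos]
    have h1 : (1:ℝ) ≤ (p:ℝ)⁻¹ * R 1 := by
      rw [le_inv_mul_iff₀ hpR]
      linarith
    nlinarith
  have hnum : ‖(y ^ p - x ^ p) * (∏' j : ℕ, (1 - y / c (j + 1)))
      + x ^ p * ((∏' j : ℕ, (1 - y / c (j + 1))) - ∏' j : ℕ, (1 - x / c (j + 1)))‖
      ≤ ‖y - x‖ * ‖x‖ ^ (p - 1) * (p:ℝ)⁻¹ := by
    refine (na _ _).trans (max_le ?_ ?_)
    · rw [norm_mul]
      calc ‖y ^ p - x ^ p‖ * ‖∏' j : ℕ, (1 - y / c (j + 1))‖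
          ≤ (‖y - x‖ * ‖x‖ ^ (p - 1) * (p:ℝ)⁻¹) * 1 :=
            mul_le_mul (pow_diff_fine na hK hd) hPy (norm_nonneg _) (by positivity)
        _ = ‖y - x‖ * ‖x‖ ^ (p - 1) * (p:ℝ)⁻¹ := mul_one _
    · rw [norm_mul, norm_pow]
      have hpow : ‖x‖ ^ p = ‖x‖ ^ (p - 1) * ‖x‖ := by
        rw [← pow_succ]
        congr 1
        omega
      calc ‖x‖ ^ p * ‖(∏' j : ℕ, (1 - y / c (j + 1))) - ∏' j : ℕ, (1 - x / c (j + 1))‖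
          ≤ ‖x‖ ^ p * (‖y - x‖ / R 1) :=
            mul_le_mul_of_nonneg_left hPdiff (by positivity)
        _ = ‖y - x‖ * ‖x‖ ^ (p - 1) * (‖x‖ / R 1) := by
            rw [hpow]
            ring
        _ ≤ ‖y - x‖ * ‖x‖ ^ (p - 1) * (p:ℝ)⁻¹ := by
            apply mul_le_mul_of_nonneg_left hxR1 (by positivity)
  calc ‖(y ^ p - x ^ p) * (∏' j : ℕ, (1 - y / c (j + 1)))
      + x ^ p * ((∏' j : ℕ, (1 - y / c (j + 1))) - ∏' j : ℕ, (1 - x / c (j + 1)))‖ * (p:ℝ)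
      ≤ (‖y - x‖ * ‖x‖ ^ (p - 1) * (p:ℝ)⁻¹) * (p:ℝ) :=
        mul_le_mul_of_nonneg_right hnum hpR.le
    _ = ‖y - x‖ * ‖x‖ ^ (p - 1) := by
        field_simp

lemma step_Bk [CompleteSpace K]
    (na : ∀ x y : K, ‖x + y‖ ≤ max ‖x‖ ‖y‖)
    (hc : ∀ j, 1 ≤ j → ‖c j‖ = R j)
    (htop : Filter.Tendsto R Filter.atTop Filter.atTop)
    (hstrict : ∀ a b, 1 ≤ a → a < b → R a < R b)
    (hRpos : ∀ j, 1 ≤ j → 0 < R j)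
    (hpK : ‖(p:K)‖ = (p:ℝ)⁻¹)
    {k : ℕ} (hk : 1 ≤ k) {x y : K} (hxk : x ∈ Bset R c k) (hyk : y ∈ Bset R c k) :
    ‖fc p c y - fc p c x‖ ≤ lam p R k * ‖y - x‖ := by
  have hp2 : 2 ≤ p := (Fact.out : p.Prime).two_le
  have hpR : (0:ℝ) < (p:ℝ) := by
    have : (2:ℝ) ≤ (p:ℝ) := by exact_mod_cast hp2
    linarith
  have hxn : ‖x‖ = R k := norm_of_mem_Bk na hc hk hxk
  have hyn : ‖y‖ = R k := norm_of_mem_Bk na hc hk hyk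
  have hRk : 0 < R k := hRpos k hk
  have hδt : ‖y - x‖ ≤ R k := by
    have := na_sub na y x
    rw [hyn, hxn] at this
    simpa using this
  have hδ0 : (0:ℝ) ≤ ‖y - x‖ := norm_nonneg _
  have hN : ∀ j, k ≤ j → R k < R (j + 1) := fun j hj => hstrict k (j + 1) hk (by omega)
  set B : ℕ → ℝ := fun j => max 1 (R k / R (j + 1)) with hB
  have hB1 : ∀ j, 1 ≤ B j := fun j => le_max_left _ _
  have hBeq : ∀ j, k ≤ j → B j = 1 := by
    intro j hj
    apply max_eq_left
    rw [div_le_one (hRpos (j + 1) (by omega))]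
    exact (hN j hj).le
  set Q : ℝ := ∏ j ∈ Finset.range k, B j with hQ
  have hQ0 : 0 < Q := Finset.prod_pos (fun j _ => lt_of_lt_of_le one_pos (hB1 j))
  have hFbound : ∀ (z : K), ‖z‖ = R k → ∀ j : ℕ, ‖1 - z / c (j + 1)‖ ≤ B j := by
    intro z hz j
    refine (norm_one_sub_le na _).trans ?_
    rw [norm_div_c hc, hz]
  have hPy : ‖∏' j : ℕ, (1 - y / c (j + 1))‖ ≤ Q :=
    tprod_norm_le na hc htop y k B hB1 hBeq (hFbound y hyn)
  have hPdiff : ‖(∏' j : ℕ, (1 - y / c (j + 1))) - ∏' j : ℕ, (1 - x / c (j + 1))‖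
      ≤ ‖y - x‖ / R k * Q := by
    apply tprod_diff na hc htop y x k B (by positivity) hB1 hBeq (hFbound y hyn) (hFbound x hxn)
    intro j
    have hRj := hRpos (j + 1) (by omega)
    have h1 : ‖y / c (j + 1) - x / c (j + 1)‖ = ‖y - x‖ / R (j + 1) := by
      rw [div_sub_div_same, norm_div_c hc]
    have h2 : ‖y - x‖ / R k * (R k / R (j + 1)) = ‖y - x‖ / R (j + 1) := by
      field_simp
    rw [h1, ← h2]
    exact mul_le_mul_of_nonneg_left (le_max_right _ _) (by positivity)
  have hpow : R k ^ p = R k ^ (p - 1) * R k := by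
    rw [← pow_succ]
    congr 1
    omega
  rw [fc_sub hpK, norm_div, hpK, div_eq_mul_inv, inv_inv]
  have hnum : ‖(y ^ p - x ^ p) * (∏' j : ℕ, (1 - y / c (j + 1)))
      + x ^ p * ((∏' j : ℕ, (1 - y / c (j + 1))) - ∏' j : ℕ, (1 - x / c (j + 1)))‖
      ≤ ‖y - x‖ * R k ^ (p - 1) * Q := by
    refine (na _ _).trans (max_le ?_ ?_)
    · rw [norm_mul]
      exact mul_le_mul (pow_diff_crude na hxn.le hyn.le p) hPy (norm_nonneg _) (by positivity)
    · rw [norm_mul, norm_pow, hxn]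
      calc R k ^ p * ‖(∏' j : ℕ, (1 - y / c (j + 1))) - ∏' j : ℕ, (1 - x / c (j + 1))‖
          ≤ R k ^ p * (‖y - x‖ / R k * Q) :=
            mul_le_mul_of_nonneg_left hPdiff (by positivity)
        _ = ‖y - x‖ * R k ^ (p - 1) * Q := by
            rw [hpow]
            field_simp
  calc ‖(y ^ p - x ^ p) * (∏' j : ℕ, (1 - y / c (j + 1)))
      + x ^ p * ((∏' j : ℕ, (1 - y / c (j + 1))) - ∏' j : ℕ, (1 - x / c (j + 1)))‖ * (p:ℝ)
      ≤ (‖y - x‖ * R k ^ (p - 1) * Q) * (p:ℝ) :=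
        mul_le_mul_of_nonneg_right hnum hpR.le
    _ = ((p:ℝ) * R k ^ (p - 1) * Q) * ‖y - x‖ := by ring
    _ = lam p R k * ‖y - x‖ := by rw [lam_eq hstrict hRpos hk hp2]


end StepLemmas

section Itin

variable (m n l : ℕ → ℕ)

lemma Lseq_one : Lseq m n l 1 = 0 := rfl

lemma Lseq_succ (k : ℕ) (hk : 1 ≤ k) :
    Lseq m n l (k + 1) = Lseq m n l k + m k + n k + l (k + 1) := by
  obtain ⟨k', rfl⟩ : ∃ k', k = k' + 1 := ⟨k - 1, by omega⟩
  rfl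

lemma Lseq_lt_succ (hm : ∀ j, 1 ≤ j → 1 ≤ m j) (k : ℕ) (hk : 1 ≤ k) :
    Lseq m n l k < Lseq m n l (k + 1) := by
  rw [Lseq_succ m n l k hk]
  have := hm k hk
  omega

lemma Lseq_mono (hm : ∀ j, 1 ≤ j → 1 ≤ m j) :
    ∀ a b, 1 ≤ a → a ≤ b → Lseq m n l a ≤ Lseq m n l b := by
  intro a b ha hab
  induction b with
  | zero => omega
  | succ b ih =>
    rcases Nat.lt_or_ge a (b + 1) with h | h
    · have hb1 : 1 ≤ b := by omega
      exact (ih (by omega)).trans (Lseq_lt_succ m n l hm b hb1).le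
    · have : a = b + 1 := by omega
      rw [this]

lemma exists_block (hm : ∀ j, 1 ≤ j → 1 ≤ m j) :
    ∀ i, ∃ k, 1 ≤ k ∧ Lseq m n l k ≤ i ∧ i < Lseq m n l (k + 1) := by
  intro i
  induction i with
  | zero =>
    refine ⟨1, le_rfl, by rw [Lseq_one], ?_⟩
    have := Lseq_lt_succ m n l hm 1 le_rfl
    rw [Lseq_one] at this
    exact this
  | succ i ih =>
    obtain ⟨k, hk1, hk2, hk3⟩ := ih
    rcases Nat.lt_or_ge (i + 1) (Lseq m n l (k + 1)) with h | h
    · exact ⟨k, hk1, by omega, h⟩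
    · refine ⟨k + 1, by omega, by omega, ?_⟩
      have := Lseq_lt_succ m n l hm (k + 1) (by omega)
      omega

lemma itin_eval (hm : ∀ j, 1 ≤ j → 1 ≤ m j) {k i : ℕ} (hk : 1 ≤ k)
    (h1 : Lseq m n l k ≤ i) (h2 : i < Lseq m n l (k + 1)) :
    itin m n l i = if i < Lseq m n l k + m k then some 0
      else if i < Lseq m n l k + m k + n k then none else some k := by
  have hbdd : ∀ j ∈ {k' : ℕ | 1 ≤ k' ∧ Lseq m n l k' ≤ i}, j ≤ k := by
    intro j hj
    by_contra hlt
    push_neg at hlt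
    have hle : Lseq m n l (k + 1) ≤ Lseq m n l j :=
      Lseq_mono m n l hm (k + 1) j (by omega) (by omega)
    have := hj.2
    omega
  have hsup : sSup {k' : ℕ | 1 ≤ k' ∧ Lseq m n l k' ≤ i} = k := by
    apply le_antisymm
    · exact csSup_le ⟨k, hk, h1⟩ hbdd
    · exact le_csSup ⟨k, hbdd⟩ ⟨hk, h1⟩
  simp only [itin]
  rw [hsup]

end Itin

end UDAux

/-- **Lemma 3.5** (Uniform disk). If condition (3.2) holds at every `k ≥ 1` and a point
`x` lies in the cylinder `C_c(α)` of the itinerary `α` associated to `m` and `ℓ`, then the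
whole disk `{|y - x| < ϱ²}` is contained in `C_c(α)`. -/
theorem uniform_disk
    (p : ℕ) [Fact p.Prime] (K : Type*) [NontriviallyNormedField K] [Algebra ℚ_[p] K]
    (hK : IsCp p K) (R : ℕ → ℝ) (hR : IsGenericRadii p R)
    (m : ℕ → ℕ) (hm : ∀ j, 1 ≤ j → 1 ≤ m j)
    (l : ℕ → ℕ) (hl : ∀ j, 2 ≤ j → 1 ≤ l j)
    (h32 : ∀ k, 1 ≤ k → Cond32 p R m l k)
    (c : ℕ → K) (hc : InC p R c) (x : K)
    (hx : ∀ i : ℕ, (fc p c)^[i] x ∈ symbSet R c (itin m (nseq p R) l i)) :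
    ∀ y : K, ‖y - x‖ < rho p ^ 2 →
      ∀ i : ℕ, (fc p c)^[i] y ∈ symbSet R c (itin m (nseq p R) l i) := by
  haveI : CompleteSpace K := hK.complete
  have na := hK.isNonarch
  have hp2 : 2 ≤ p := (Fact.out : p.Prime).two_le
  have hp1R : (1:ℝ) < (p:ℝ) := UDAux.one_lt_castp hp2
  have hpK : ‖(p:K)‖ = (p:ℝ)⁻¹ := UDAux.norm_pK hK
  obtain ⟨⟨hinc, hR1, htop⟩, -⟩ := hR
  have hc' : ∀ j, 1 ≤ j → ‖c j‖ = R j := hc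
  have hstrict : ∀ a b, 1 ≤ a → a < b → R a < R b := by
    intro a b ha hab
    induction b with
    | zero => omega
    | succ b ih =>
      rcases Nat.lt_or_ge a b with h | h
      · exact (ih h).trans (hinc b (by omega))
      · have hab' : a = b := by omega
        subst hab'
        exact hinc a ha
  have hmono : ∀ a b, 1 ≤ a → a ≤ b → R a ≤ R b := by
    intro a b ha hab
    rcases eq_or_lt_of_le hab with h | h
    · rw [h]
    · exact (hstrict a b ha h).le
  have hRgtp : ∀ j, 1 ≤ j → (p:ℝ) < R j :=
    fun j hj => lt_of_lt_of_le hR1 (hmono 1 j le_rfl hj)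
  have hRpos : ∀ j, 1 ≤ j → 0 < R j := fun j hj => lt_trans (by linarith) (hRgtp j hj)
  have hRbig : ∀ j : ℕ, (1:ℝ) < R (j + 1) :=
    fun j => lt_trans (by linarith) (hRgtp (j + 1) (by omega))
  have hRone : ∀ j : ℕ, R 1 ≤ R (j + 1) := fun j => hmono 1 (j + 1) le_rfl (by omega)
  have hρ0 : 0 < rho p := UDAux.rho_pos hp2
  have hρ1 : rho p < 1 := UDAux.rho_lt_one hp2
  have hρsq1 : rho p ^ 2 < 1 := by nlinarith
  intro y hy
  set n : ℕ → ℕ := nseq p R with hn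
  set L : ℕ → ℕ := Lseq m n l with hLdef
  set X : ℕ → K := fun i => (fc p c)^[i] x with hXdef
  set Y : ℕ → K := fun i => (fc p c)^[i] y with hYdef
  set δ : ℕ → ℝ := fun i => ‖Y i - X i‖ with hδdef
  have hδ0 : ∀ i, 0 ≤ δ i := fun i => norm_nonneg _
  have hXs : ∀ i, X (i + 1) = fc p c (X i) := fun i => Function.iterate_succ_apply' _ _ _
  have hYs : ∀ i, Y (i + 1) = fc p c (Y i) := fun i => Function.iterate_succ_apply' _ _ _
  have hδs : ∀ i, δ (i + 1) = ‖fc p c (Y i) - fc p c (X i)‖ := by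
    intro i
    show ‖Y (i + 1) - X (i + 1)‖ = _
    rw [hXs, hYs]
  -- the block lemma
  have blockstep : ∀ k, 1 ≤ k → δ (L k) < rho p ^ 2 →
      (∀ i, L k ≤ i → i < L (k + 1) → Y i ∈ symbSet R c (itin m n l i)) ∧
        δ (L (k + 1)) < rho p ^ 2 := by
    intro k hk hD
    have hLsucc : L (k + 1) = L k + m k + n k + l (k + 1) := UDAux.Lseq_succ m n l k hk
    have hmk : 1 ≤ m k := hm k hk
    have hlk : 1 ≤ l (k + 1) := hl (k + 1) (by omega)
    have hitin : ∀ i, L k ≤ i → i < L (k + 1) →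
        itin m n l i = if i < L k + m k then some 0
          else if i < L k + m k + n k then none else some k :=
      fun i hi1 hi2 => UDAux.itin_eval m n l hm hk hi1 hi2
    -- x-orbit memberships
    have hxB0 : ∀ i, i < m k → X (L k + i) ∈ Bset R c 0 := by
      intro i hi
      have h := hx (L k + i)
      rw [hitin (L k + i) (by omega) (by omega), if_pos (by omega)] at h
      exact h
    have hxA : ∀ i, i < n k → X (L k + m k + i) ∈ Aset R c := by
      intro i hi
      have h := hx (L k + m k + i)
      rw [hitin (L k + m k + i) (by omega) (by omega), if_neg (by omega),
        if_pos (by omega)] at h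
      exact h
    have hxBk : ∀ i, i < l (k + 1) → X (L k + m k + n k + i) ∈ Bset R c k := by
      intro i hi
      have h := hx (L k + m k + n k + i)
      rw [hitin (L k + m k + n k + i) (by omega) (by omega), if_neg (by omega),
        if_neg (by omega)] at h
      exact h
    -- values along the B0 phase
    set a : ℕ → ℝ := fun i => ‖X (L k + i)‖ with hadef
    have ha0' : ∀ i, 0 ≤ a i := fun i => norm_nonneg _
    have ha_rec : ∀ i, i < m k → a (i + 1) = (p:ℝ) * a i ^ p := by
      intro i hi
      show ‖X (L k + (i + 1))‖ = _
      rw [show L k + (i + 1) = (L k + i) + 1 by omega, hXs]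
      exact UDAux.norm_fc_B0 na hc' htop hRbig hpK (UDAux.mem_B0_iff.1 (hxB0 i hi))
    have ha_lt1 : ∀ i, i < m k → a i < 1 := fun i hi => UDAux.mem_B0_iff.1 (hxB0 i hi)
    have ha_exit : 1 ≤ a (m k) := by
      rcases Nat.eq_zero_or_pos (n k) with h0 | hpos
      · have h := hxBk 0 (by omega)
        rw [h0] at h
        have h2 := UDAux.norm_of_mem_Bk na hc' hk h
        show (1:ℝ) ≤ ‖X (L k + m k)‖
        have h3 : ‖X (L k + m k)‖ = R k := h2
        rw [h3]
        linarith [hRgtp k hk]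
      · have h := hxA 0 hpos
        show (1:ℝ) ≤ ‖X (L k + m k)‖
        exact UDAux.norm_ge_of_A h
    have habs : ∀ i j, i + j ≤ m k → a i < rho p → a (i + j) < rho p := by
      intro i j
      induction j with
      | zero => intro _ h; simpa using h
      | succ j ih =>
        intro hij hai
        have h1 : a (i + j) < rho p := ih (by omega) hai
        have h2 : a (i + (j + 1)) = (p:ℝ) * a (i + j) ^ p := by
          rw [show i + (j + 1) = (i + j) + 1 by omega]
          exact ha_rec (i + j) (by omega)
        rw [h2]
        calc (p:ℝ) * a (i + j) ^ p < (p:ℝ) * rho p ^ p := by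
              apply mul_lt_mul_of_pos_left _ (by linarith)
              exact pow_lt_pow_left₀ h1 (ha0' _) (by omega)
          _ = rho p := UDAux.p_mul_rho_pow hp2
    have ha_rho : ∀ i, i < m k → rho p ≤ a i := by
      intro i hi
      by_contra hlt
      push_neg at hlt
      have h1 := habs i (m k - i) (by omega) hlt
      rw [show i + (m k - i) = m k by omega] at h1
      linarith
    have ha_pos : ∀ i, i < m k → 0 < a i := fun i hi => lt_of_lt_of_le hρ0 (ha_rho i hi)
    -- the per-step smallness bound
    have hbnd : ∀ i, i < m k →
        δ (L k) * ((p:ℝ) ^ i)⁻¹ * (a i / a 0) ≤ rho p * a i := by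
      intro i hi
      have ha00 : rho p ≤ a 0 := ha_rho 0 (by omega)
      have hpi : (1:ℝ) ≤ (p:ℝ) ^ i := one_le_pow₀ (by linarith)
      have ha00' : 0 < a 0 := ha_pos 0 (by omega)
      have hinv : ((p:ℝ) ^ i)⁻¹ ≤ 1 := by
        rw [inv_le_one_iff₀]
        right
        exact hpi
      have hdiv : a i / a 0 ≤ a i / rho p :=
        div_le_div_of_nonneg_left (ha0' i) hρ0 ha00
      have h2 : δ (L k) * ((p:ℝ) ^ i)⁻¹ * (a i / a 0) ≤ rho p ^ 2 * 1 * (a i / rho p) := by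
        apply mul_le_mul _ hdiv (div_nonneg (ha0' i) ha00'.le) (by positivity)
        exact mul_le_mul hD.le hinv (by positivity) (by positivity)
      have h3 : rho p ^ 2 * 1 * (a i / rho p) = rho p * a i := by
        rw [pow_two, mul_one]
        field_simp
        try ring
      exact h2.trans_eq h3
    -- phase 1
    have phase1 : ∀ i, i ≤ m k → δ (L k + i) ≤ δ (L k) * ((p:ℝ) ^ i)⁻¹ * (a i / a 0) := by
      intro i
      induction i with
      | zero =>
        intro _
        have ha00 : 0 < a 0 := ha_pos 0 (by omega)
        rw [show L k + 0 = L k by omega, pow_zero, div_self (ne_of_gt ha00)]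
        simp
      | succ i ih =>
        intro hi1
        have hi : i < m k := by omega
        have hprev := ih (by omega)
        have hδρ : δ (L k + i) ≤ rho p * a i := hprev.trans (hbnd i hi)
        have hstep := UDAux.step_B0 na hc' htop hRbig hRone hR1 hpK hK
          (ha_lt1 i hi) hδρ
        have hrec := ha_rec i hi
        have hain : 0 < a i := ha_pos i hi
        have ha00 : 0 < a 0 := ha_pos 0 (by omega)
        have hap : a i ^ p = a i ^ (p - 1) * a i := by
          rw [← pow_succ]
          congr 1
          omega
        calc δ (L k + (i + 1)) = ‖fc p c (Y (L k + i)) - fc p c (X (L k + i))‖ := by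
              rw [show L k + (i + 1) = (L k + i) + 1 by omega, hδs]
          _ ≤ δ (L k + i) * a i ^ (p - 1) := hstep
          _ ≤ (δ (L k) * ((p:ℝ) ^ i)⁻¹ * (a i / a 0)) * a i ^ (p - 1) := by
              apply mul_le_mul_of_nonneg_right hprev
              exact pow_nonneg (ha0' i) _
          _ = δ (L k) * ((p:ℝ) ^ (i + 1))⁻¹ * (a (i + 1) / a 0) := by
              rw [hrec, hap, pow_succ]
              field_simp
    -- e: the contraction factor after phase 1
    set e : ℝ := δ (L k) * ((p:ℝ) ^ m k)⁻¹ * (rho p)⁻¹ with hedef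
    have he0 : 0 ≤ e := by
      apply mul_nonneg (mul_nonneg (hδ0 _) (by positivity)) (by positivity)
    have he1 : e < 1 := by
      have h1 : (1:ℝ) ≤ (p:ℝ) ^ m k := one_le_pow₀ (by linarith)
      have hinv : ((p:ℝ) ^ m k)⁻¹ ≤ 1 := by
        rw [inv_le_one_iff₀]
        right
        exact h1
      have h2 : e ≤ rho p ^ 2 * 1 * (rho p)⁻¹ := by
        apply mul_le_mul _ le_rfl (by positivity) (by positivity)
        exact mul_le_mul hD.le hinv (by positivity) (by positivity)
      have h3 : rho p ^ 2 * 1 * (rho p)⁻¹ = rho p := by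
        rw [pow_two, mul_one, mul_inv_cancel_right₀ (ne_of_gt hρ0)]
      rw [h3] at h2
      linarith
    have hphase1end : δ (L k + m k) ≤ e * a (m k) := by
      have h1 := phase1 (m k) le_rfl
      have ha00 : rho p ≤ a 0 := ha_rho 0 (by omega)
      have ha00' : 0 < a 0 := ha_pos 0 (by omega)
      calc δ (L k + m k) ≤ δ (L k) * ((p:ℝ) ^ m k)⁻¹ * (a (m k) / a 0) := h1
        _ ≤ δ (L k) * ((p:ℝ) ^ m k)⁻¹ * (a (m k) / rho p) := by
            apply mul_le_mul_of_nonneg_left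
              (div_le_div_of_nonneg_left (ha0' _) hρ0 ha00)
              (mul_nonneg (hδ0 _) (by positivity))
        _ = e * a (m k) := by
            rw [hedef, div_eq_mul_inv]
            ring
    -- phase 2
    have phase2 : ∀ i, i ≤ n k → δ (L k + m k + i) ≤ e * ‖X (L k + m k + i)‖ := by
      intro i
      induction i with
      | zero =>
        intro _
        exact hphase1end
      | succ i ih =>
        intro hi1
        have hi : i < n k := by omega
        have hprev := ih (by omega)
        have hXA := hxA i hi
        have hn1 : 1 ≤ ‖X (L k + m k + i)‖ := UDAux.norm_ge_of_A hXA
        have hn0 : 0 < ‖X (L k + m k + i)‖ := by linarith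
        have hδlt : δ (L k + m k + i) < ‖X (L k + m k + i)‖ := by
          calc δ (L k + m k + i) ≤ e * ‖X (L k + m k + i)‖ := hprev
            _ < 1 * ‖X (L k + m k + i)‖ := by
                apply mul_lt_mul_of_pos_right he1 hn0
            _ = ‖X (L k + m k + i)‖ := one_mul _
        have hstep := UDAux.step_A na hc' htop hRpos hpK hXA hδlt
        have hdivle : δ (L k + m k + i) / ‖X (L k + m k + i)‖ ≤ e := by
          rw [div_le_iff₀ hn0]
          exact hprev
        calc δ (L k + m k + (i + 1))
            = ‖fc p c (Y (L k + m k + i)) - fc p c (X (L k + m k + i))‖ := by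
              rw [show L k + m k + (i + 1) = (L k + m k + i) + 1 by omega, hδs]
          _ ≤ δ (L k + m k + i) / ‖X (L k + m k + i)‖ * ‖fc p c (X (L k + m k + i))‖ :=
              hstep
          _ ≤ e * ‖fc p c (X (L k + m k + i))‖ :=
              mul_le_mul_of_nonneg_right hdivle (norm_nonneg _)
          _ = e * ‖X (L k + m k + (i + 1))‖ := by
              rw [show L k + m k + (i + 1) = (L k + m k + i) + 1 by omega, hXs]
    -- entering B_k
    have hXq0 : X (L k + m k + n k) ∈ Bset R c k := by
      exact hxBk 0 (by omega)
    have hq0 : δ (L k + m k + n k) ≤ e * R k := by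
      have h1 := phase2 (n k) le_rfl
      have h2 := UDAux.norm_of_mem_Bk na hc' hk hXq0
      rw [h2] at h1
      exact h1
    -- phase 3
    have h32k := h32 k hk
    rw [Cond32] at h32k
    have hlam1 : 1 ≤ lam p R k := UDAux.lam_ge_one hstrict hRpos hRbig hk hp2
    have hRk0 : 0 < R k := hRpos k hk
    have hkey : e * R k * lam p R k ^ l (k + 1)
        = δ (L k) * ((rho p)⁻¹ * R k * ((p:ℝ) ^ m k)⁻¹ * lam p R k ^ l (k + 1)) := by
      rw [hedef]
      ring
    have h32pos : 0 ≤ (rho p)⁻¹ * R k * ((p:ℝ) ^ m k)⁻¹ * lam p R k ^ l (k + 1) := by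
      positivity
    have hsmall : ∀ i, i ≤ l (k + 1) → e * R k * lam p R k ^ i < rho p ^ 2 := by
      intro i hi
      calc e * R k * lam p R k ^ i ≤ e * R k * lam p R k ^ l (k + 1) :=
            mul_le_mul_of_nonneg_left (pow_le_pow_right₀ hlam1 hi)
              (mul_nonneg he0 hRk0.le)
        _ = δ (L k) * ((rho p)⁻¹ * R k * ((p:ℝ) ^ m k)⁻¹ * lam p R k ^ l (k + 1)) := hkey
        _ ≤ δ (L k) * 1 := mul_le_mul_of_nonneg_left h32k.le (hδ0 _)
        _ = δ (L k) := mul_one _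
        _ < rho p ^ 2 := hD
    have phase3 : ∀ i, i ≤ l (k + 1) →
        δ (L k + m k + n k + i) ≤ e * R k * lam p R k ^ i := by
      intro i
      induction i with
      | zero =>
        intro _
        rw [pow_zero, mul_one]
        exact hq0
      | succ i ih =>
        intro hi1
        have hi : i < l (k + 1) := by omega
        have hprev := ih (by omega)
        have hXBk := hxBk i hi
        have hδRk : δ (L k + m k + n k + i) < R k := by
          calc δ (L k + m k + n k + i) ≤ e * R k * lam p R k ^ i := hprev
            _ < rho p ^ 2 := hsmall i hi.le
            _ < 1 := hρsq1
            _ < R k := by linarith [hRgtp k hk]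
        have hYBk : Y (L k + m k + n k + i) ∈ Bset R c k :=
          UDAux.trans_Bk na hk hXBk hδRk
        have hstep := UDAux.step_Bk na hc' htop hstrict hRpos hpK hk hXBk hYBk
        calc δ (L k + m k + n k + (i + 1))
            = ‖fc p c (Y (L k + m k + n k + i)) - fc p c (X (L k + m k + n k + i))‖ := by
              rw [show L k + m k + n k + (i + 1) = (L k + m k + n k + i) + 1 by omega, hδs]
          _ ≤ lam p R k * δ (L k + m k + n k + i) := hstep
          _ ≤ lam p R k * (e * R k * lam p R k ^ i) :=
              mul_le_mul_of_nonneg_left hprev (by linarith)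
          _ = e * R k * lam p R k ^ (i + 1) := by
              rw [pow_succ]
              ring
    constructor
    · -- memberships of the y-orbit within the block
      intro i hi1 hi2
      rw [hitin i hi1 hi2]
      by_cases hcase1 : i < L k + m k
      · rw [if_pos hcase1]
        obtain ⟨j, hjm, rfl⟩ : ∃ j, j < m k ∧ i = L k + j :=
          ⟨i - L k, by omega, by omega⟩
        show Y (L k + j) ∈ Bset R c 0
        apply UDAux.trans_B0 na (hxB0 _ hjm)
        have h1 : δ (L k + j) ≤ rho p * a j :=
          (phase1 _ hjm.le).trans (hbnd _ hjm)
        have h2 : rho p * a j < 1 := by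
          have := ha_lt1 _ hjm
          nlinarith [ha0' j]
        exact lt_of_le_of_lt h1 h2
      · rw [if_neg hcase1]
        by_cases hcase2 : i < L k + m k + n k
        · rw [if_pos hcase2]
          obtain ⟨j, hjn, rfl⟩ : ∃ j, j < n k ∧ i = L k + m k + j :=
            ⟨i - (L k + m k), by omega, by omega⟩
          show Y (L k + m k + j) ∈ Aset R c
          have hXA := hxA _ hjn
          have hn1 : 1 ≤ ‖X (L k + m k + j)‖ := UDAux.norm_ge_of_A hXA
          have hδlt : δ (L k + m k + j) < ‖X (L k + m k + j)‖ := by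
            calc δ (L k + m k + j) ≤ e * ‖X (L k + m k + j)‖ := phase2 _ hjn.le
              _ < 1 * ‖X (L k + m k + j)‖ := by
                  apply mul_lt_mul_of_pos_right he1 (by linarith)
              _ = _ := one_mul _
          exact UDAux.trans_A na hc' hXA hδlt
        · rw [if_neg hcase2]
          obtain ⟨j, hjl, rfl⟩ : ∃ j, j < l (k + 1) ∧ i = L k + m k + n k + j :=
            ⟨i - (L k + m k + n k), by omega, by omega⟩
          show Y (L k + m k + n k + j) ∈ Bset R c k
          apply UDAux.trans_Bk na hk (hxBk _ hjl)
          calc δ (L k + m k + n k + j)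
              ≤ e * R k * lam p R k ^ j := phase3 _ hjl.le
            _ < rho p ^ 2 := hsmall _ hjl.le
            _ < 1 := hρsq1
            _ < R k := by linarith [hRgtp k hk]
    · -- contraction at the end of the block
      rw [hLsucc]
      calc δ (L k + m k + n k + l (k + 1))
          ≤ e * R k * lam p R k ^ l (k + 1) := phase3 _ le_rfl
        _ < rho p ^ 2 := hsmall _ le_rfl
  -- conclude
  have main : ∀ k, 1 ≤ k → δ (L k) < rho p ^ 2 := by
    intro k
    induction k with
    | zero => omega
    | succ k ih =>
      intro _
      rcases Nat.eq_zero_or_pos k with h0 | hpos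
      · subst h0
        show δ (L 1) < rho p ^ 2
        rw [show L 1 = 0 from rfl]
        show ‖(fc p c)^[0] y - (fc p c)^[0] x‖ < rho p ^ 2
        simpa using hy
      · exact (blockstep k hpos (ih hpos)).2
  intro i
  obtain ⟨k, hk1, hk2, hk3⟩ := UDAux.exists_block m n l hm i
  exact (blockstep k hk1 (main k hk1)).1 i hk2 hk3
end
end

section
/- Let r = (R_j)_{j≥1} be a generic sequence of radii and c ∈ C(r). For every z ∈ ℂ_p: if z ∈ B_0 and z ≠ 0, then |f_c'(z)| = |f_c(z)|/(p·|z|); if z ∈ B_j for some j ≥ 1, then |f_c'(z)| = φ(R_j)/R_j; and if z ∈ A, then |f_c'(z)| ≤ |f_c(z)|/|z|. -/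
noncomputable section

section RadiiLemmas

open Filter

variable {p : ℕ} {R : ℕ → ℝ}

lemma radii_lt (hR : IsRadii p R) : ∀ i j : ℕ, 1 ≤ i → i < j → R i < R j := by
  intro i j h1 hij
  induction j, hij using Nat.le_induction with
  | base => exact hR.1 i h1
  | succ j hj ih => exact ih.trans (hR.1 j (by omega))

lemma radii_le (hR : IsRadii p R) : ∀ i j : ℕ, 1 ≤ i → i ≤ j → R i ≤ R j := by
  intro i j h1 hij
  rcases eq_or_lt_of_le hij with rfl | h
  · exact le_rfl
  · exact (radii_lt hR i j h1 h).le

lemma prod_Icc_one_eq (f : ℕ → ℝ) : ∀ n, ∏ i ∈ Finset.Icc 1 n, f i = ∏ i ∈ Finset.range n, f (i + 1) := by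
  intro n
  induction n with
  | zero => simp
  | succ n ih => rw [Finset.prod_Icc_succ_top (by omega), Finset.prod_range_succ, ih]

lemma phi_eval (hR : IsRadii p R) {j0 : ℕ} (hj0 : 1 ≤ j0) :
    phi p R (R j0) = (p : ℝ) * (∏ i ∈ Finset.Icc 1 (j0 - 1), R i)⁻¹ * R j0 ^ (p + j0 - 1) := by
  have hmem : j0 ∈ {j : ℕ | 1 ≤ j ∧ R j0 ≤ R j} := ⟨hj0, le_rfl⟩
  have hinf : sInf {j : ℕ | 1 ≤ j ∧ R j0 ≤ R j} = j0 := by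
    refine le_antisymm (Nat.sInf_le hmem) ?_
    have hmem2 := Nat.sInf_mem (⟨j0, hmem⟩ : Set.Nonempty {j : ℕ | 1 ≤ j ∧ R j0 ≤ R j})
    by_contra hcon
    push_neg at hcon
    have hlt := radii_lt hR _ j0 hmem2.1 (by omega)
    exact absurd hmem2.2 (not_le.mpr hlt)
  have hrfl : phi p R (R j0) = (p : ℝ) *
      (∏ i ∈ Finset.Icc 1 (sInf {j : ℕ | 1 ≤ j ∧ R j0 ≤ R j} - 1), R i)⁻¹ *
      R j0 ^ (p + sInf {j : ℕ | 1 ≤ j ∧ R j0 ≤ R j} - 1) := rfl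
  rw [hrfl, hinf]

end RadiiLemmas

namespace DF

open Filter Topology
set_option linter.unusedSectionVars false

variable {K : Type*} [NontriviallyNormedField K] [IsUltrametricDist K]

lemma add_norm_eq_right {x y : K} (h : ‖x‖ < ‖y‖) : ‖x + y‖ = ‖y‖ := by
  rw [IsUltrametricDist.norm_add_eq_max_of_norm_ne_norm (ne_of_lt h), max_eq_right h.le]

lemma add_norm_eq_left {x y : K} (h : ‖y‖ < ‖x‖) : ‖x + y‖ = ‖x‖ := by
  rw [add_comm, add_norm_eq_right h]

lemma sub_norm_eq_left {x y : K} (h : ‖y‖ < ‖x‖) : ‖x - y‖ = ‖x‖ := by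
  rw [sub_eq_add_neg, add_norm_eq_left (by simpa using h)]

lemma norm_prod_one_add_sub_one {ι : Type*} (s : Finset ι) (u : ι → K) {r : ℝ}
    (h0 : 0 ≤ r) (h1 : r ≤ 1) (hu : ∀ j ∈ s, ‖u j‖ ≤ r) :
    ‖(∏ j ∈ s, (1 + u j)) - 1‖ ≤ r := by
  classical
  induction s using Finset.induction_on with
  | empty => simpa using h0
  | @insert a s ha ih =>
    rw [Finset.prod_insert ha]
    have h2 : ‖(∏ j ∈ s, (1 + u j)) - 1‖ ≤ r :=
      ih fun j hj => hu j (Finset.mem_insert_of_mem hj)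
    have hua : ‖u a‖ ≤ r := hu a (Finset.mem_insert_self a s)
    have h3 : ‖(1 : K) + u a‖ ≤ 1 := by
      refine (IsUltrametricDist.norm_add_le_max _ _).trans ?_
      simp only [norm_one]
      exact max_le le_rfl (hua.trans h1)
    have key : (1 + u a) * (∏ j ∈ s, (1 + u j)) - 1
        = (1 + u a) * ((∏ j ∈ s, (1 + u j)) - 1) + u a := by ring
    rw [key]
    refine (IsUltrametricDist.norm_add_le_max _ _).trans (max_le ?_ hua)
    rw [norm_mul]
    calc ‖(1 : K) + u a‖ * ‖(∏ j ∈ s, (1 + u j)) - 1‖ ≤ 1 * r :=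
          mul_le_mul h3 h2 (norm_nonneg _) zero_le_one
      _ = r := one_mul r

lemma norm_prod_one_add_le_one {ι : Type*} (s : Finset ι) (u : ι → K)
    (hu : ∀ j ∈ s, ‖u j‖ ≤ 1) : ‖∏ j ∈ s, (1 + u j)‖ ≤ 1 := by
  have h := norm_prod_one_add_sub_one s u zero_le_one le_rfl hu
  have : (∏ j ∈ s, (1 + u j)) = ((∏ j ∈ s, (1 + u j)) - 1) + 1 := by ring
  rw [this]
  refine (IsUltrametricDist.norm_add_le_max _ _).trans ?_
  simp only [norm_one]
  exact max_le h le_rfl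

variable (b : ℕ → K)

def aF (z : K) (j : ℕ) : K := 1 - z / b j

def pF (z : K) (N : ℕ) : K := ∏ i ∈ Finset.range N, aF b z i

def sF (z : K) : ℕ → K
  | 0 => 0
  | N + 1 => sF z N * aF b z N + pF b z N * (-(b N)⁻¹)

def limF (z : K) : K := ∏' j, aF b z j

def limS (z : K) : K := ∑' k, (sF b z (k + 1) - sF b z k)

def mF (z : K) (N : ℕ) : ℝ := ∏ i ∈ Finset.range N, max 1 ‖aF b z i‖

variable {b}

lemma pF_succ (z : K) (N : ℕ) : pF b z (N + 1) = pF b z N * aF b z N :=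
  Finset.prod_range_succ _ _

lemma norm_pF_prod (z : K) (N : ℕ) : ‖pF b z N‖ = ∏ i ∈ Finset.range N, ‖aF b z i‖ := by
  rw [pF, norm_prod]

lemma sF_succ (z : K) (N : ℕ) :
    sF b z (N + 1) = sF b z N * aF b z N + pF b z N * (-(b N)⁻¹) := rfl

lemma mF_succ (z : K) (N : ℕ) : mF b z (N + 1) = mF b z N * max 1 ‖aF b z N‖ :=
  Finset.prod_range_succ _ _

section hb

variable (hb : ∀ j, 1 < ‖b j‖)
include hb

lemma bpos (j : ℕ) : (0 : ℝ) < ‖b j‖ := lt_trans zero_lt_one (hb j)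

lemma bne (j : ℕ) : b j ≠ 0 := by
  intro h
  have := hb j
  rw [h, norm_zero] at this
  linarith

lemma aF_eq (z : K) (j : ℕ) : aF b z j = (b j - z) / b j := by
  rw [aF, sub_div, div_self (bne hb j)]

lemma norm_aF (z : K) (j : ℕ) : ‖aF b z j‖ = ‖b j - z‖ / ‖b j‖ := by
  rw [aF_eq hb, norm_div]

lemma norm_aF_of_lt {z : K} {j : ℕ} (h : ‖z‖ < ‖b j‖) : ‖aF b z j‖ = 1 := by
  rw [norm_aF hb, sub_norm_eq_left h, div_self (ne_of_gt (bpos hb j))]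

lemma norm_zdiv (z : K) (j : ℕ) : ‖-(z / b j)‖ = ‖z‖ / ‖b j‖ := by
  rw [norm_neg, norm_div]

lemma aF_one_add (z : K) (j : ℕ) : aF b z j = 1 + -(z / b j) := by
  rw [aF]; ring

variable (hbtop : Tendsto (fun j => ‖b j‖) atTop atTop)
include hbtop

lemma multipliable_aF [CompleteSpace K] (z : K) : Multipliable (aF b z) := by
  have key : CauchySeq (fun s : Finset ℕ => ∏ j ∈ s, aF b z j) := by
    rw [Metric.cauchySeq_iff']
    intro ε hε
    obtain ⟨N1, hN1⟩ : ∃ N1, ∀ j, N1 ≤ j → ‖z‖ ≤ ‖b j‖ :=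
      eventually_atTop.mp (hbtop.eventually_ge_atTop ‖z‖)
    set C := max 1 ‖pF b z N1‖ with hCdef
    have hC1 : (1 : ℝ) ≤ C := le_max_left _ _
    have hC0 : (0 : ℝ) < C := lt_of_lt_of_le zero_lt_one hC1
    set δ := min 1 (ε / (2 * C)) with hδdef
    have hδ0 : 0 < δ := lt_min zero_lt_one (by positivity)
    obtain ⟨N2', hN2'⟩ : ∃ N2', ∀ j, N2' ≤ j → ‖z‖ / δ ≤ ‖b j‖ :=
      eventually_atTop.mp (hbtop.eventually_ge_atTop (‖z‖ / δ))
    set N2 := max N1 N2' with hN2def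
    refine ⟨Finset.range N2, fun s hs => ?_⟩
    have hsub : Finset.range N2 ⊆ s := hs
    have htail : ∀ j, N2 ≤ j → ‖z‖ / ‖b j‖ ≤ δ := by
      intro j hj
      have h1 : ‖z‖ / δ ≤ ‖b j‖ := hN2' j (le_trans (le_max_right _ _) hj)
      rw [div_le_iff₀ (bpos hb j)]
      rw [div_le_iff₀ hδ0] at h1
      linarith [mul_comm δ ‖b j‖]
    have hup : ∀ j, N1 ≤ j → ‖z‖ / ‖b j‖ ≤ 1 := by
      intro j hj
      rw [div_le_one (bpos hb j)]
      exact hN1 j hj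
    -- norm of pF N2 is at most C
    have hpFC : ‖pF b z N2‖ ≤ C := by
      have hsplit : pF b z N1 * ∏ i ∈ Finset.Ico N1 N2, aF b z i = pF b z N2 :=
        Finset.prod_range_mul_prod_Ico _ (le_max_left _ _)
      have hmid : ‖∏ i ∈ Finset.Ico N1 N2, aF b z i‖ ≤ 1 := by
        have : (∏ i ∈ Finset.Ico N1 N2, aF b z i)
            = ∏ i ∈ Finset.Ico N1 N2, (1 + -(z / b i)) :=
          Finset.prod_congr rfl fun i _ => aF_one_add hb z i
        rw [this]
        refine norm_prod_one_add_le_one _ _ fun j hj => ?_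
        rw [norm_zdiv hb]
        exact hup j (Finset.mem_Ico.mp hj).1
      calc ‖pF b z N2‖ = ‖pF b z N1‖ * ‖∏ i ∈ Finset.Ico N1 N2, aF b z i‖ := by
            rw [← hsplit, norm_mul]
        _ ≤ C * 1 := mul_le_mul (le_max_right _ _) hmid (norm_nonneg _) (le_of_lt hC0)
        _ = C := mul_one C
    have hdiff : ‖(∏ j ∈ s \ Finset.range N2, aF b z j) - 1‖ ≤ δ := by
      have : (∏ j ∈ s \ Finset.range N2, aF b z j)
          = ∏ j ∈ s \ Finset.range N2, (1 + -(z / b j)) :=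
        Finset.prod_congr rfl fun i _ => aF_one_add hb z i
      rw [this]
      refine norm_prod_one_add_sub_one _ _ (le_of_lt hδ0) (min_le_left _ _) fun j hj => ?_
      rw [norm_zdiv hb]
      refine htail j ?_
      have := (Finset.mem_sdiff.mp hj).2
      simpa using this
    have heq : (fun s : Finset ℕ => ∏ j ∈ s, aF b z j) s
        - (fun s : Finset ℕ => ∏ j ∈ s, aF b z j) (Finset.range N2)
        = ((∏ j ∈ s \ Finset.range N2, aF b z j) - 1) * pF b z N2 := by
      simp only [pF]
      rw [sub_one_mul, Finset.prod_sdiff hsub]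
    rw [dist_eq_norm, heq, norm_mul]
    calc ‖(∏ j ∈ s \ Finset.range N2, aF b z j) - 1‖ * ‖pF b z N2‖ ≤ δ * C :=
          mul_le_mul hdiff hpFC (norm_nonneg _) (le_of_lt hδ0)
      _ ≤ (ε / (2 * C)) * C := mul_le_mul_of_nonneg_right (min_le_right _ _) (le_of_lt hC0)
      _ = ε / 2 := by field_simp
      _ < ε := by linarith
  obtain ⟨a, ha⟩ := cauchySeq_tendsto_of_complete key
  exact ⟨a, ha⟩

lemma tendsto_pF [CompleteSpace K] (z : K) :
    Tendsto (fun N => pF b z N) atTop (𝓝 (limF b z)) :=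
  ((multipliable_aF hb hbtop z).hasProd).tendsto_prod_nat

end hb
section bounds

variable (hb : ∀ j, 1 < ‖b j‖)
include hb

lemma one_le_mF (z : K) (N : ℕ) : 1 ≤ mF b z N := by
  rw [mF]
  calc (1:ℝ) = ∏ _i ∈ Finset.range N, 1 := by simp
    _ ≤ ∏ i ∈ Finset.range N, max 1 ‖aF b z i‖ :=
        Finset.prod_le_prod (fun i _ => zero_le_one) (fun i _ => le_max_left _ _)

lemma mF_nonneg (z : K) (N : ℕ) : 0 ≤ mF b z N :=
  le_trans zero_le_one (one_le_mF hb z N)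

lemma mF_mono (z : K) : Monotone (mF b z) := by
  refine monotone_nat_of_le_succ fun N => ?_
  rw [mF_succ]
  exact le_mul_of_one_le_right (mF_nonneg hb z N) (le_max_left _ _)

lemma norm_pF_le (z : K) (N : ℕ) : ‖pF b z N‖ ≤ mF b z N := by
  rw [pF, norm_prod]
  exact Finset.prod_le_prod (fun i _ => norm_nonneg _) fun i _ => le_max_right _ _

lemma inv_b_le_one (j : ℕ) : ‖b j‖⁻¹ ≤ 1 :=
  inv_le_one_of_one_le₀ (le_of_lt (hb j))

lemma norm_sF_le (z : K) : ∀ N, ‖sF b z N‖ ≤ mF b z N := by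
  intro N
  induction N with
  | zero => simp [sF, mF]
  | succ N ih =>
    rw [sF_succ]
    refine (IsUltrametricDist.norm_add_le_max _ _).trans (max_le ?_ ?_)
    · rw [norm_mul, mF_succ]
      exact mul_le_mul ih (le_max_right _ _) (norm_nonneg _) (mF_nonneg hb z N)
    · rw [norm_mul, norm_neg, norm_inv]
      calc ‖pF b z N‖ * ‖b N‖⁻¹ ≤ mF b z N * 1 :=
            mul_le_mul (norm_pF_le hb z N) (inv_b_le_one hb N)
              (inv_nonneg.mpr (norm_nonneg _)) (mF_nonneg hb z N)
        _ = mF b z N := mul_one _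
        _ ≤ mF b z (N + 1) := mF_mono hb z (Nat.le_succ N)

variable (hbtop : Tendsto (fun j => ‖b j‖) atTop atTop)
include hbtop

lemma mF_bound (z : K) : ∃ C, 1 ≤ C ∧ ∀ N, mF b z N ≤ C := by
  obtain ⟨N0, hN0⟩ : ∃ N0, ∀ j, N0 ≤ j → ‖z‖ < ‖b j‖ :=
    eventually_atTop.mp (hbtop.eventually_gt_atTop ‖z‖)
  refine ⟨mF b z N0, one_le_mF hb z N0, fun N => ?_⟩
  rcases le_total N N0 with h | h
  · exact mF_mono hb z h
  · obtain ⟨d, rfl⟩ := Nat.exists_eq_add_of_le h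
    induction d with
    | zero => simp
    | succ d ih =>
      have he : N0 + (d + 1) = (N0 + d) + 1 := rfl
      rw [he, mF_succ, norm_aF_of_lt hb (hN0 (N0 + d) (Nat.le_add_right _ _)), max_self,
        mul_one]
      exact ih (Nat.le_add_right _ _)

lemma tendsto_sF [CompleteSpace K] (z : K) :
    Tendsto (fun N => sF b z N) atTop (𝓝 (limS b z)) := by
  obtain ⟨C, hC1, hC⟩ := mF_bound hb hbtop z
  have hC0 : (0:ℝ) < C := lt_of_lt_of_le zero_lt_one hC1
  have hd : ∀ k, ‖sF b z (k + 1) - sF b z k‖ ≤ C * max ‖z‖ 1 / ‖b k‖ := by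
    intro k
    have hrw : sF b z (k + 1) - sF b z k
        = sF b z k * (-(z / b k)) + pF b z k * (-(b k)⁻¹) := by
      rw [sF_succ, aF]
      ring
    rw [hrw]
    refine (IsUltrametricDist.norm_add_le_max _ _).trans (max_le ?_ ?_)
    · rw [norm_mul, norm_zdiv hb, ← mul_div_assoc]
      have h2 : ‖sF b z k‖ * ‖z‖ ≤ C * max ‖z‖ 1 :=
        mul_le_mul ((norm_sF_le hb z k).trans (hC k)) (le_max_left _ _)
          (norm_nonneg _) (le_of_lt hC0)
      exact div_le_div_of_nonneg_right h2 (norm_nonneg _) |>.trans le_rfl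
    · rw [norm_mul, norm_neg, norm_inv, ← div_eq_mul_inv]
      have h2 : ‖pF b z k‖ ≤ C * max ‖z‖ 1 := by
        calc ‖pF b z k‖ ≤ C := (norm_pF_le hb z k).trans (hC k)
          _ ≤ C * max ‖z‖ 1 := le_mul_of_one_le_right (le_of_lt hC0) (le_max_right _ _)
      exact div_le_div_of_nonneg_right h2 (norm_nonneg _) |>.trans le_rfl
  have hto : Tendsto (fun k => C * max ‖z‖ 1 / ‖b k‖) atTop (𝓝 0) :=
    Tendsto.div_atTop tendsto_const_nhds hbtop
  have hsum : Summable (fun k => sF b z (k + 1) - sF b z k) := by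
    apply NonarchimedeanAddGroup.summable_of_tendsto_cofinite_zero
    rw [Nat.cofinite_eq_atTop, tendsto_zero_iff_norm_tendsto_zero]
    exact squeeze_zero (fun k => norm_nonneg _) hd hto
  have h1 := hsum.hasSum.tendsto_sum_nat
  rw [show (∑' k, (sF b z (k + 1) - sF b z k)) = limS b z from rfl] at h1
  refine h1.congr fun N => ?_
  rw [Finset.sum_range_sub (fun i => sF b z i) N]
  simp [sF]

omit hbtop

lemma quad (z w : K) (hw : ‖w - z‖ ≤ 1) :
    ∀ N, ‖pF b w N - pF b z N - (w - z) * sF b z N‖ ≤ mF b z N * ‖w - z‖ ^ 2 ∧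
      ‖pF b w N - pF b z N‖ ≤ mF b z N * ‖w - z‖ := by
  intro N
  induction N with
  | zero => simp [pF, sF, mF]
  | succ N ih =>
    obtain ⟨ih1, ih2⟩ := ih
    have haw : aF b w N = aF b z N - (w - z) * (b N)⁻¹ := by
      simp only [aF, div_eq_mul_inv]
      ring
    have e1 : pF b w (N + 1) - pF b z (N + 1) - (w - z) * sF b z (N + 1)
        = aF b z N * (pF b w N - pF b z N - (w - z) * sF b z N)
          + (-((w - z) * (b N)⁻¹)) * (pF b w N - pF b z N) := by
      rw [pF_succ, pF_succ, sF_succ, haw]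
      ring
    have hq : ‖pF b w (N + 1) - pF b z (N + 1) - (w - z) * sF b z (N + 1)‖
        ≤ mF b z (N + 1) * ‖w - z‖ ^ 2 := by
      rw [e1]
      refine (IsUltrametricDist.norm_add_le_max _ _).trans (max_le ?_ ?_)
      · rw [norm_mul, mF_succ, mul_comm (mF b z N) (max 1 ‖aF b z N‖), mul_assoc]
        exact mul_le_mul (le_max_right _ _) ih1 (norm_nonneg _)
          (le_trans zero_le_one (le_max_left _ _))
      · rw [norm_mul, norm_neg, norm_mul, norm_inv]
        calc ‖w - z‖ * ‖b N‖⁻¹ * ‖pF b w N - pF b z N‖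
            ≤ ‖w - z‖ * 1 * (mF b z N * ‖w - z‖) :=
              mul_le_mul
                (mul_le_mul le_rfl (inv_b_le_one hb N)
                  (inv_nonneg.mpr (norm_nonneg _)) (norm_nonneg _))
                ih2 (norm_nonneg _) (by positivity)
          _ = mF b z N * ‖w - z‖ ^ 2 := by ring
          _ ≤ mF b z (N + 1) * ‖w - z‖ ^ 2 :=
              mul_le_mul_of_nonneg_right (mF_mono hb z (Nat.le_succ N)) (sq_nonneg _)
    refine ⟨hq, ?_⟩
    have e2 : pF b w (N + 1) - pF b z (N + 1)
        = (pF b w (N + 1) - pF b z (N + 1) - (w - z) * sF b z (N + 1))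
          + (w - z) * sF b z (N + 1) := by ring
    rw [e2]
    refine (IsUltrametricDist.norm_add_le_max _ _).trans (max_le ?_ ?_)
    · calc ‖pF b w (N + 1) - pF b z (N + 1) - (w - z) * sF b z (N + 1)‖
          ≤ mF b z (N + 1) * ‖w - z‖ ^ 2 := hq
        _ = mF b z (N + 1) * ‖w - z‖ * ‖w - z‖ := by ring
        _ ≤ mF b z (N + 1) * ‖w - z‖ * 1 :=
            mul_le_mul_of_nonneg_left hw
              (mul_nonneg (mF_nonneg hb z _) (norm_nonneg _))
        _ = mF b z (N + 1) * ‖w - z‖ := mul_one _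
    · rw [norm_mul, mul_comm]
      exact mul_le_mul_of_nonneg_right (norm_sF_le hb z (N + 1)) (norm_nonneg _)

include hbtop

lemma quad_lim [CompleteSpace K] (z w : K) (hw : ‖w - z‖ ≤ 1) {C : ℝ}
    (hC : ∀ N, mF b z N ≤ C) :
    ‖limF b w - limF b z - (w - z) * limS b z‖ ≤ C * ‖w - z‖ ^ 2 := by
  have ht : Tendsto (fun N => ‖pF b w N - pF b z N - (w - z) * sF b z N‖) atTop
      (𝓝 ‖limF b w - limF b z - (w - z) * limS b z‖) := by
    exact (((tendsto_pF hb hbtop w).sub (tendsto_pF hb hbtop z)).sub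
      ((tendsto_sF hb hbtop z).const_mul (w - z))).norm
  refine le_of_tendsto ht (Filter.Eventually.of_forall fun N => ?_)
  exact (quad hb z w hw N).1.trans
    (mul_le_mul_of_nonneg_right (hC N) (sq_nonneg _))

lemma hasDerivAt_limF [CompleteSpace K] (z : K) :
    HasDerivAt (limF b) (limS b z) z := by
  obtain ⟨C, hC1, hC⟩ := mF_bound hb hbtop z
  have hC0 : (0:ℝ) < C := lt_of_lt_of_le zero_lt_one hC1
  rw [hasDerivAt_iff_isLittleO, Asymptotics.isLittleO_iff]
  intro ε hε
  have hball : ∀ᶠ w in 𝓝 z, ‖w - z‖ < min 1 (ε / C) := by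
    have : Metric.ball z (min 1 (ε / C)) ∈ 𝓝 z :=
      Metric.ball_mem_nhds z (lt_min zero_lt_one (by positivity))
    filter_upwards [this] with w hw
    rw [Metric.mem_ball, dist_eq_norm] at hw
    exact hw
  filter_upwards [hball] with w hw
  have hw1 : ‖w - z‖ ≤ 1 := le_of_lt (lt_of_lt_of_le hw (min_le_left _ _))
  have hw2 : ‖w - z‖ ≤ ε / C := le_of_lt (lt_of_lt_of_le hw (min_le_right _ _))
  have h := quad_lim hb hbtop z w hw1 hC
  rw [smul_eq_mul]
  calc ‖limF b w - limF b z - (w - z) * limS b z‖ ≤ C * ‖w - z‖ ^ 2 := h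
    _ = C * ‖w - z‖ * ‖w - z‖ := by ring
    _ ≤ C * (ε / C) * ‖w - z‖ :=
        mul_le_mul_of_nonneg_right (mul_le_mul_of_nonneg_left hw2 hC0.le) (norm_nonneg _)
    _ = ε * ‖w - z‖ := by field_simp
end bounds
section regions

variable [CompleteSpace K]
variable (hb : ∀ j, 1 < ‖b j‖) (hbtop : Tendsto (fun j => ‖b j‖) atTop atTop)
include hb hbtop

lemma norm_limF_of_eventually {z : K} {v : ℝ}
    (h : ∀ᶠ N in atTop, ‖pF b z N‖ = v) : ‖limF b z‖ = v := by
  have h1 : Tendsto (fun N => ‖pF b z N‖) atTop (𝓝 ‖limF b z‖) :=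
    (tendsto_pF hb hbtop z).norm
  have h2 : Tendsto (fun N => ‖pF b z N‖) atTop (𝓝 v) :=
    Tendsto.congr' (h.mono fun N hN => hN.symm) tendsto_const_nhds
  exact tendsto_nhds_unique h1 h2

lemma norm_limS_of_eventually {z : K} {v : ℝ}
    (h : ∀ᶠ N in atTop, ‖sF b z N‖ = v) : ‖limS b z‖ = v := by
  have h1 : Tendsto (fun N => ‖sF b z N‖) atTop (𝓝 ‖limS b z‖) :=
    (tendsto_sF hb hbtop z).norm
  have h2 : Tendsto (fun N => ‖sF b z N‖) atTop (𝓝 v) :=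
    Tendsto.congr' (h.mono fun N hN => hN.symm) tendsto_const_nhds
  exact tendsto_nhds_unique h1 h2

lemma norm_limS_le_of_eventually {z : K} {v : ℝ}
    (h : ∀ᶠ N in atTop, ‖sF b z N‖ ≤ v) : ‖limS b z‖ ≤ v :=
  le_of_tendsto (tendsto_sF hb hbtop z).norm h

omit hbtop

lemma norm_pF_const {z : K} {N0 : ℕ} (h : ∀ i, N0 ≤ i → ‖aF b z i‖ = 1) :
    ∀ N, N0 ≤ N → ‖pF b z N‖ = ‖pF b z N0‖ := by
  intro N hN
  obtain ⟨d, rfl⟩ := Nat.exists_eq_add_of_le hN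
  induction d with
  | zero => rfl
  | succ d ih =>
    have he : N0 + (d + 1) = (N0 + d) + 1 := rfl
    rw [he, pF_succ, norm_mul, h (N0 + d) (Nat.le_add_right _ _), mul_one]
    exact ih (Nat.le_add_right _ _)

/-- key induction: if `‖z‖ ≤ ‖b i - z‖` for all `i < N` then `‖sF N‖ ≤ ‖pF N‖ / ‖z‖`. -/
lemma sF_div_le {z : K} (hz0 : 0 < ‖z‖) :
    ∀ N, (∀ i, i < N → ‖z‖ ≤ ‖b i - z‖) → ‖sF b z N‖ ≤ ‖pF b z N‖ / ‖z‖ := by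
  intro N
  induction N with
  | zero =>
    intro _
    simp only [sF, norm_zero]
    positivity
  | succ N ih =>
    intro hgood
    have ihN := ih fun i hi => hgood i (hi.trans (Nat.lt_succ_self N))
    have hN := hgood N (Nat.lt_succ_self N)
    rw [sF_succ]
    refine (IsUltrametricDist.norm_add_le_max _ _).trans (max_le ?_ ?_)
    · rw [norm_mul, pF_succ, norm_mul]
      calc ‖sF b z N‖ * ‖aF b z N‖ ≤ (‖pF b z N‖ / ‖z‖) * ‖aF b z N‖ :=
            mul_le_mul_of_nonneg_right ihN (norm_nonneg _)
        _ = ‖pF b z N‖ * ‖aF b z N‖ / ‖z‖ := by ring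
    · rw [norm_mul, norm_neg, norm_inv, pF_succ, norm_mul, norm_aF hb,
        le_div_iff₀ hz0]
      calc ‖pF b z N‖ * ‖b N‖⁻¹ * ‖z‖ = ‖pF b z N‖ * (‖z‖ / ‖b N‖) := by ring
        _ ≤ ‖pF b z N‖ * (‖b N - z‖ / ‖b N‖) :=
            mul_le_mul_of_nonneg_left
              (div_le_div_of_nonneg_right hN (norm_nonneg _)) (norm_nonneg _)

-- Region `B_0`.
include hbtop

lemma B0_limF {z : K} (hz : ‖z‖ < 1) : ‖limF b z‖ = 1 := by
  refine norm_limF_of_eventually hb hbtop (Filter.Eventually.of_forall fun N => ?_)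
  rw [pF, norm_prod]
  exact Finset.prod_eq_one fun i _ => norm_aF_of_lt hb (hz.trans (hb i))

lemma B0_limS {z : K} (hbmono : ∀ i j : ℕ, i ≤ j → ‖b i‖ ≤ ‖b j‖) (hz : ‖z‖ < 1) :
    ‖limS b z‖ ≤ ‖b 0‖⁻¹ := by
  refine norm_limS_le_of_eventually hb hbtop (Filter.Eventually.of_forall ?_)
  intro N
  induction N with
  | zero =>
    simp only [sF, norm_zero]
    positivity
  | succ N ih =>
    rw [sF_succ]
    refine (IsUltrametricDist.norm_add_le_max _ _).trans (max_le ?_ ?_)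
    · rw [norm_mul, norm_aF_of_lt hb (hz.trans (hb N)), mul_one]
      exact ih
    · rw [norm_mul, norm_neg, norm_inv]
      have h1 : ‖pF b z N‖ = 1 := by
        rw [pF, norm_prod]
        exact Finset.prod_eq_one fun i _ => norm_aF_of_lt hb (hz.trans (hb i))
      rw [h1, one_mul]
      exact inv_anti₀ (bpos hb 0) (hbmono 0 N (Nat.zero_le N))

-- Region `A`.
lemma A_limS {z : K} (hz0 : 0 < ‖z‖) (hA : ∀ i, ‖z‖ ≤ ‖b i - z‖) :
    ‖limS b z‖ ≤ ‖limF b z‖ / ‖z‖ := by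
  obtain ⟨N0, hN0⟩ : ∃ N0, ∀ j, N0 ≤ j → ‖z‖ < ‖b j‖ :=
    eventually_atTop.mp (hbtop.eventually_gt_atTop ‖z‖)
  have hones : ∀ i, N0 ≤ i → ‖aF b z i‖ = 1 := fun i hi => norm_aF_of_lt hb (hN0 i hi)
  have hconst := norm_pF_const hb hones
  have hlimF : ‖limF b z‖ = ‖pF b z N0‖ :=
    norm_limF_of_eventually hb hbtop (eventually_atTop.mpr ⟨N0, hconst⟩)
  refine norm_limS_le_of_eventually hb hbtop (eventually_atTop.mpr ⟨N0, fun N hN => ?_⟩)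
  refine (sF_div_le hb hz0 N fun i _ => hA i).trans (le_of_eq ?_)
  rw [hconst N hN, hlimF]

-- Region `B_j`.
section Bj

variable {z : K} {j1 : ℕ}
  (hstrict : ∀ i j : ℕ, i < j → ‖b i‖ < ‖b j‖)
  (hzeq : ‖z‖ = ‖b j1‖) (hlt : ‖b j1 - z‖ < ‖b j1‖)
include hstrict hzeq hlt

omit hbtop

lemma Bj_hz0 : 0 < ‖z‖ := hzeq ▸ bpos hb j1

lemma Bj_low : ∀ i, i < j1 → ‖b i - z‖ = ‖z‖ := by
  intro i hi
  have h : ‖b i‖ < ‖-z‖ := by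
    rw [norm_neg, hzeq]
    exact hstrict i j1 hi
  rw [sub_eq_add_neg, add_norm_eq_right h, norm_neg]

lemma Bj_high : ∀ i, j1 < i → ‖aF b z i‖ = 1 := fun i hi =>
  norm_aF_of_lt hb (hzeq ▸ hstrict j1 i hi)

lemma Bj_Ppos : 0 < ‖pF b z j1‖ := by
  rw [pF, norm_prod]
  refine Finset.prod_pos fun i hi => ?_
  rw [norm_aF hb, Bj_low hb hstrict hzeq hlt i (Finset.mem_range.mp hi)]
  exact div_pos (Bj_hz0 hb hstrict hzeq hlt) (bpos hb i)

lemma Bj_pF : ∀ N, j1 < N → ‖pF b z N‖ = ‖pF b z j1‖ * (‖b j1 - z‖ / ‖z‖) := by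
  have base : ‖pF b z (j1 + 1)‖ = ‖pF b z j1‖ * (‖b j1 - z‖ / ‖z‖) := by
    rw [pF_succ, norm_mul, norm_aF hb, hzeq]
  intro N hN
  rw [norm_pF_const hb (fun i hi => Bj_high hb hstrict hzeq hlt i hi) N hN, base]

lemma Bj_sF : ∀ N, j1 < N → ‖sF b z N‖ = ‖pF b z j1‖ / ‖z‖ := by
  have hz0 := Bj_hz0 hb hstrict hzeq hlt
  have hP := Bj_Ppos hb hstrict hzeq hlt
  have hratio : ‖b j1 - z‖ / ‖z‖ < 1 := by
    rw [div_lt_one hz0, hzeq]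
    exact hlt
  intro N hN
  induction N, hN using Nat.le_induction with
  | base =>
    rw [sF_succ]
    have hy : ‖pF b z j1 * (-(b j1)⁻¹)‖ = ‖pF b z j1‖ / ‖z‖ := by
      rw [norm_mul, norm_neg, norm_inv, ← hzeq, div_eq_mul_inv]
    have hx : ‖sF b z j1 * aF b z j1‖ < ‖pF b z j1‖ / ‖z‖ := by
      rw [norm_mul]
      have hs1 : ‖sF b z j1‖ ≤ ‖pF b z j1‖ / ‖z‖ :=
        sF_div_le hb hz0 j1 fun i hi =>
          le_of_eq (Bj_low hb hstrict hzeq hlt i hi).symm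
      have hAj1 : ‖aF b z j1‖ = ‖b j1 - z‖ / ‖z‖ := by rw [norm_aF hb, hzeq]
      calc ‖sF b z j1‖ * ‖aF b z j1‖
          ≤ (‖pF b z j1‖ / ‖z‖) * (‖b j1 - z‖ / ‖z‖) := by
            rw [hAj1]
            exact mul_le_mul_of_nonneg_right hs1 (by positivity)
        _ < (‖pF b z j1‖ / ‖z‖) * 1 :=
            mul_lt_mul_of_pos_left hratio (div_pos hP hz0)
        _ = ‖pF b z j1‖ / ‖z‖ := mul_one _
    rw [add_norm_eq_right (by rw [hy]; exact hx), hy]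
  | succ N hN ih =>
    rw [sF_succ]
    have hx : ‖sF b z N * aF b z N‖ = ‖pF b z j1‖ / ‖z‖ := by
      rw [norm_mul, Bj_high hb hstrict hzeq hlt N hN, mul_one, ih]
    have hy : ‖pF b z N * (-(b N)⁻¹)‖ < ‖pF b z j1‖ / ‖z‖ := by
      rw [norm_mul, norm_neg, norm_inv, Bj_pF hb hstrict hzeq hlt N hN]
      calc ‖pF b z j1‖ * (‖b j1 - z‖ / ‖z‖) * ‖b N‖⁻¹
          = (‖pF b z j1‖ / ‖z‖) * (‖b j1 - z‖ / ‖b N‖) := by ring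
        _ < (‖pF b z j1‖ / ‖z‖) * 1 := by
            refine mul_lt_mul_of_pos_left ?_ (div_pos hP hz0)
            rw [div_lt_one (bpos hb N)]
            exact hlt.trans (hstrict j1 N hN)
        _ = ‖pF b z j1‖ / ‖z‖ := mul_one _
    rw [add_norm_eq_left (by rw [hx]; exact hy), hx]

include hbtop

lemma Bj_limF : ‖limF b z‖ = ‖pF b z j1‖ * (‖b j1 - z‖ / ‖z‖) :=
  norm_limF_of_eventually hb hbtop
    (eventually_atTop.mpr ⟨j1 + 1, fun N hN => Bj_pF hb hstrict hzeq hlt N hN⟩)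

lemma Bj_limS : ‖limS b z‖ = ‖pF b z j1‖ / ‖z‖ :=
  norm_limS_of_eventually hb hbtop
    (eventually_atTop.mpr ⟨j1 + 1, fun N hN => Bj_sF hb hstrict hzeq hlt N hN⟩)

end Bj

end regions
end DF

/-- **Lemma 4.1** (derivative estimates). `|f_c'(z)| = |f_c(z)|/(p|z|)` on `B_0 \ {0}`,
`|f_c'(z)| = φ(R_j)/R_j` on `B_j` for `j ≥ 1`, and `|f_c'(z)| ≤ |f_c(z)|/|z|` on `A`. -/
theorem deriv_fc
    (p : ℕ) [Fact p.Prime] (K : Type*) [NontriviallyNormedField K] [Algebra ℚ_[p] K]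
    (hK : IsCp p K) (R : ℕ → ℝ) (hR : IsGenericRadii p R)
    (c : ℕ → K) (hc : InC p R c) :
    ∀ z : K,
      (z ∈ Bset R c 0 → z ≠ 0 → ‖deriv (fc p c) z‖ = ‖fc p c z‖ / ((p : ℝ) * ‖z‖)) ∧
      (∀ j, 1 ≤ j → z ∈ Bset R c j → ‖deriv (fc p c) z‖ = phi p R (R j) / R j) ∧
      (z ∈ Aset R c → ‖deriv (fc p c) z‖ ≤ ‖fc p c z‖ / ‖z‖) := by
  intro z
  haveI : CompleteSpace K := hK.complete
  haveI : IsUltrametricDist K :=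
    IsUltrametricDist.isUltrametricDist_of_isNonarchimedean_norm hK.isNonarch
  obtain ⟨hRad, _⟩ := hR
  set b : ℕ → K := fun j => c (j + 1) with hbdef
  have hbnorm : ∀ j, ‖b j‖ = R (j + 1) := fun j => hc (j + 1) (by omega)
  have hp : p.Prime := Fact.out
  have hp2 : 2 ≤ p := hp.two_le
  have hp1 : 1 ≤ p := by omega
  have hppos : (0 : ℝ) < p := by exact_mod_cast hp.pos
  have hp1' : (1 : ℝ) ≤ p := by exact_mod_cast hp1
  have hpR : (p : ℝ) < R 1 := hRad.2.1
  have hp1R : (1 : ℝ) < R 1 := lt_of_le_of_lt hp1' hpR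
  have hb : ∀ j, 1 < ‖b j‖ := fun j => by
    rw [hbnorm]
    exact lt_of_lt_of_le hp1R (radii_le hRad 1 (j + 1) le_rfl (by omega))
  have hbtop : Filter.Tendsto (fun j => ‖b j‖) Filter.atTop Filter.atTop := by
    have h1 : Filter.Tendsto (fun j : ℕ => R (j + 1)) Filter.atTop Filter.atTop :=
      hRad.2.2.comp (Filter.tendsto_add_atTop_nat 1)
    exact h1.congr fun j => (hbnorm j).symm
  have hstrict : ∀ i j : ℕ, i < j → ‖b i‖ < ‖b j‖ := fun i j hij => by
    rw [hbnorm, hbnorm]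
    exact radii_lt hRad (i + 1) (j + 1) (by omega) (by omega)
  have hbmono : ∀ i j : ℕ, i ≤ j → ‖b i‖ ≤ ‖b j‖ := by
    intro i j hij
    rcases eq_or_lt_of_le hij with rfl | h
    · exact le_rfl
    · exact (hstrict _ _ h).le
  have hFd := DF.hasDerivAt_limF hb hbtop z
  have hg : HasDerivAt (fun w : K => w ^ p / (p : K)) ((p : K) * z ^ (p - 1) / (p : K)) z :=
    (hasDerivAt_pow p z).div_const _
  have hfc_eq : fc p c = fun w => w ^ p / (p : K) * DF.limF b w := rfl
  have hder : HasDerivAt (fc p c)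
      ((p : K) * z ^ (p - 1) / (p : K) * DF.limF b z + z ^ p / (p : K) * DF.limS b z) z := by
    rw [hfc_eq]
    exact hg.mul hFd
  have hpK : ‖(p : K)‖ = ((p : ℝ))⁻¹ := by
    rw [← map_natCast (algebraMap ℚ_[p] K) p, hK.norm_extends, Padic.norm_p]
  have hpK0 : (p : K) ≠ 0 := by
    intro h
    rw [h, norm_zero] at hpK
    have h2 : (0 : ℝ) < ((p : ℝ))⁻¹ := by positivity
    linarith [hpK.symm.le]
  have hT1s : (p : K) * z ^ (p - 1) / (p : K) = z ^ (p - 1) := by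
    field_simp
  have hderiv : deriv (fc p c) z
      = z ^ (p - 1) * DF.limF b z + z ^ p / (p : K) * DF.limS b z := by
    rw [hder.deriv, hT1s]
  have hfcnorm : ‖fc p c z‖ = ‖z‖ ^ p * p * ‖DF.limF b z‖ := by
    have h1 : fc p c z = z ^ p / (p : K) * DF.limF b z := rfl
    rw [h1, norm_mul, norm_div, norm_pow, hpK, div_eq_mul_inv, inv_inv]
  refine ⟨?_, ?_, ?_⟩
  · -- Region B₀
    intro hzB hz0
    have hz : ‖z‖ < 1 := by simpa [Bset] using hzB
    have hzpos : 0 < ‖z‖ := norm_pos_iff.mpr hz0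
    have hpow : ‖z‖ ^ p = ‖z‖ ^ (p - 1) * ‖z‖ := by
      rw [← pow_succ, Nat.sub_add_cancel hp1]
    have hLf := DF.B0_limF hb hbtop hz
    have hLs := DF.B0_limS hb hbtop hbmono hz
    have hb0 : (p : ℝ) < ‖b 0‖ := by
      rw [hbnorm]
      exact hpR
    have hb0pos : (0 : ℝ) < ‖b 0‖ := lt_trans hppos hb0
    have hT2 : ‖z ^ p / (p : K) * DF.limS b z‖ < ‖z‖ ^ (p - 1) := by
      rw [norm_mul, norm_div, norm_pow, hpK, div_eq_mul_inv, inv_inv]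
      calc ‖z‖ ^ p * p * ‖DF.limS b z‖ ≤ ‖z‖ ^ p * p * ‖b 0‖⁻¹ :=
            mul_le_mul_of_nonneg_left hLs (by positivity)
        _ = ‖z‖ ^ p * ((p : ℝ) / ‖b 0‖) := by
            rw [mul_assoc, div_eq_mul_inv]
        _ < ‖z‖ ^ p * 1 :=
            mul_lt_mul_of_pos_left ((div_lt_one hb0pos).mpr hb0) (pow_pos hzpos p)
        _ = ‖z‖ ^ p := mul_one _
        _ < ‖z‖ ^ (p - 1) := pow_lt_pow_right_of_lt_one₀ hzpos hz (by omega)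
    have hT1n : ‖z ^ (p - 1) * DF.limF b z‖ = ‖z‖ ^ (p - 1) := by
      rw [norm_mul, norm_pow, hLf, mul_one]
    rw [hderiv, DF.add_norm_eq_left (by rw [hT1n]; exact hT2), hT1n, hfcnorm, hLf, mul_one,
      hpow]
    field_simp
  · -- Region B_j
    intro j hj hzB
    obtain ⟨j1, rfl⟩ : ∃ j1, j = j1 + 1 := ⟨j - 1, by omega⟩
    have hzn : ‖z - c (j1 + 1)‖ < R (j1 + 1) := by simpa [Bset] using hzB
    have hbj1 : ‖b j1‖ = R (j1 + 1) := hbnorm j1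
    have hbc : b j1 = c (j1 + 1) := rfl
    have hlt : ‖b j1 - z‖ < ‖b j1‖ := by
      rw [norm_sub_rev, hbc, hbj1]
      exact hzn
    have hzeq : ‖z‖ = ‖b j1‖ := by
      have h1 : z = b j1 + (z - b j1) := by ring
      rw [h1, DF.add_norm_eq_left (by rw [norm_sub_rev] at hlt; exact hlt)]
    have hz0 : 0 < ‖z‖ := hzeq ▸ DF.bpos hb j1
    have hpow : ‖z‖ ^ p = ‖z‖ ^ (p - 1) * ‖z‖ := by
      rw [← pow_succ, Nat.sub_add_cancel hp1]
    have hP : 0 < ‖DF.pF b z j1‖ := DF.Bj_Ppos hb hstrict hzeq hlt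
    have hLf := DF.Bj_limF hb hbtop hstrict hzeq hlt
    have hLs := DF.Bj_limS hb hbtop hstrict hzeq hlt
    have hT2n : ‖z ^ p / (p : K) * DF.limS b z‖ = ‖z‖ ^ p * p * (‖DF.pF b z j1‖ / ‖z‖) := by
      rw [norm_mul, norm_div, norm_pow, hpK, div_eq_mul_inv, inv_inv, hLs]
    have hT1n : ‖z ^ (p - 1) * DF.limF b z‖
        = ‖z‖ ^ (p - 1) * (‖DF.pF b z j1‖ * (‖b j1 - z‖ / ‖z‖)) := by
      rw [norm_mul, norm_pow, hLf]
    have hT1ltT2 : ‖z ^ (p - 1) * DF.limF b z‖ < ‖z ^ p / (p : K) * DF.limS b z‖ := by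
      rw [hT1n, hT2n]
      have hr1 : ‖b j1 - z‖ / ‖z‖ < 1 := by
        rw [div_lt_one hz0, hzeq]
        exact hlt
      calc ‖z‖ ^ (p - 1) * (‖DF.pF b z j1‖ * (‖b j1 - z‖ / ‖z‖))
          < ‖z‖ ^ (p - 1) * (‖DF.pF b z j1‖ * 1) := by
            refine mul_lt_mul_of_pos_left ?_ (pow_pos hz0 _)
            exact mul_lt_mul_of_pos_left hr1 hP
        _ = ‖z‖ ^ (p - 1) * ‖DF.pF b z j1‖ := by rw [mul_one]
        _ ≤ (p : ℝ) * (‖z‖ ^ (p - 1) * ‖DF.pF b z j1‖) :=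
            le_mul_of_one_le_left (by positivity) hp1'
        _ = ‖z‖ ^ p * p * (‖DF.pF b z j1‖ / ‖z‖) := by
            rw [hpow]
            field_simp
    rw [hderiv, DF.add_norm_eq_right hT1ltT2, hT2n]
    -- compute the value of ‖pF‖ and φ
    have hPval : ‖DF.pF b z j1‖ = ‖z‖ ^ j1 * (∏ i ∈ Finset.range j1, R (i + 1))⁻¹ := by
      rw [DF.norm_pF_prod]
      have hcongr : ∀ i ∈ Finset.range j1, ‖DF.aF b z i‖ = ‖z‖ / R (i + 1) := by
        intro i hi
        rw [DF.norm_aF hb, DF.Bj_low hb hstrict hzeq hlt i (Finset.mem_range.mp hi), hbnorm]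
      rw [Finset.prod_congr rfl hcongr, Finset.prod_div_distrib, Finset.prod_const,
        Finset.card_range, div_eq_mul_inv]
    have hzR : ‖z‖ = R (j1 + 1) := by rw [hzeq, hbj1]
    have hphi := phi_eval hRad (j0 := j1 + 1) (by omega)
    have hicc : ∏ i ∈ Finset.Icc 1 ((j1 + 1) - 1), R i = ∏ i ∈ Finset.range j1, R (i + 1) := by
      simpa using prod_Icc_one_eq R j1
    have hQpos : 0 < ∏ i ∈ Finset.range j1, R (i + 1) := by
      refine Finset.prod_pos fun i _ => ?_
      have := radii_le hRad 1 (i + 1) le_rfl (by omega)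
      linarith
    rw [hphi, hicc, hPval, hzR]
    have hRj0 : (0 : ℝ) < R (j1 + 1) := by
      have := radii_le hRad 1 (j1 + 1) le_rfl (by omega)
      linarith
    have hexp : p + (j1 + 1) - 1 = (p - 1) + j1 + 1 := by omega
    have hexp2 : p = (p - 1) + 1 := by omega
    rw [hexp]
    rw [pow_succ, pow_add]
    rw [hexp2, pow_succ]
    field_simp
    ring
    rw [show 1 + (p - 1) - 1 = p - 1 by omega]
  · -- Region A
    intro hzA
    have hnot : ∀ j : ℕ, z ∉ Bset R c j := by
      intro j hj
      exact hzA (Set.mem_iUnion.mpr ⟨j, hj⟩)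
    have h0 : 1 ≤ ‖z‖ := by
      have h := hnot 0
      simp [Bset] at h
      exact h
    have hz0 : (0 : ℝ) < ‖z‖ := lt_of_lt_of_le zero_lt_one h0
    have hpow : ‖z‖ ^ p = ‖z‖ ^ (p - 1) * ‖z‖ := by
      rw [← pow_succ, Nat.sub_add_cancel hp1]
    have hA : ∀ i, ‖b i‖ ≤ ‖b i - z‖ := by
      intro i
      have h := hnot (i + 1)
      simp [Bset] at h
      rw [hbnorm, norm_sub_rev]
      exact h
    have hge : ∀ i, ‖z‖ ≤ ‖b i - z‖ := by
      intro i
      rcases le_or_gt ‖z‖ ‖b i‖ with h | h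
      · exact h.trans (hA i)
      · rw [norm_sub_rev]
        exact le_of_eq (DF.sub_norm_eq_left h).symm
    have hLs := DF.A_limS hb hbtop hz0 hge
    have hfinal : ‖z‖ ^ p * p * ‖DF.limF b z‖ / ‖z‖
        = (p : ℝ) * (‖z‖ ^ (p - 1) * ‖DF.limF b z‖) := by
      rw [hpow]
      field_simp
    rw [hderiv, hfcnorm, hfinal]
    refine (IsUltrametricDist.norm_add_le_max _ _).trans (max_le ?_ ?_)
    · rw [norm_mul, norm_pow]
      exact le_mul_of_one_le_left (by positivity) hp1'
    · rw [norm_mul, norm_div, norm_pow, hpK, div_eq_mul_inv, inv_inv]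
      calc ‖z‖ ^ p * p * ‖DF.limS b z‖ ≤ ‖z‖ ^ p * p * (‖DF.limF b z‖ / ‖z‖) :=
            mul_le_mul_of_nonneg_left hLs (by positivity)
        _ = (p : ℝ) * (‖z‖ ^ (p - 1) * ‖DF.limF b z‖) := by
            rw [hpow]
            field_simp

end
end
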